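/- arXiv:1711.04110 — 4 statements merged into one kernel-verified Lean document; each statement's English description precedes it below -/
import Mathlib

section
/- For every word w of length n over Â = {0,...,b}, the sum over all words u of length ℓ_n over A = {0,...,b−1} of the number of aligned occurrences of w in e_n(u) equals b^{ℓ_n}. -/
open Filter Topology

/-- Number of aligned occurrences of `v` in `u` (at positions ≡ 1 mod |v|). -/
def alocc {α : Type*} [DecidableEq α] (u v : List α) : ℕ :=
  ((List.range (u.length / v.length)).filter
    (fun i => decide ((u.drop (i * v.length)).take v.length = v))).length

/-- Number of (not necessarily aligned, possibly overlapping) occurrences of `v` in `u`. -/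
def occCount {α : Type*} [DecidableEq α] (u v : List α) : ℕ :=
  ((List.range (u.length + 1 - v.length)).filter
    (fun i => decide ((u.drop i).take v.length = v))).length

/-- The `i`-th word of length `n` over `{0,...,b}` in lexicographic order
(the base-`b+1` digits of `i`, most significant first). -/
def lexWord (b n i : ℕ) : List (Fin (b + 1)) :=
  (List.range n).map (fun j => ⟨i / (b + 1) ^ (n - 1 - j) % (b + 1), Nat.mod_lt _ (Nat.succ_pos b)⟩)

/-- The Champernowne-like word `w_n`: the concatenation in lexicographic order of all
words of length `n` over the alphabet `{0,...,b}`. -/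
def champ (b n : ℕ) : List (Fin (b + 1)) :=
  ((List.range ((b + 1) ^ n)).map (lexWord b n)).flatten

/-- `ℓ_n`: the number of symbols of `w_n` different from `b`. -/
def elln (b n : ℕ) : ℕ := (champ b n).countP (fun x => decide ((x : ℕ) ≠ b))

/-- The reduction operator: removes all occurrences of the symbol `b`. -/
def red (b : ℕ) (v : List (Fin (b + 1))) : List (Fin b) :=
  v.filterMap (fun x => if h : (x : ℕ) < b then some ⟨(x : ℕ), h⟩ else none)

/-- The wildcard operator: replaces every symbol different from `b` by a wildcard.
`true` encodes the symbol `b` and `false` encodes the wildcard `⋆`. -/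
def wc (b : ℕ) (v : List (Fin (b + 1))) : List Bool :=
  v.map (fun x => decide ((x : ℕ) = b))

/-- Expansion of a word `v` over `{0,...,b-1}` along a pattern `p` over `{0,...,b}`:
positions where `p` has the symbol `b` get `b`, the other positions are filled
with the symbols of `v` in order. -/
def expandAux (b : ℕ) : List (Fin (b + 1)) → List (Fin b) → List (Fin (b + 1))
  | [], _ => []
  | c :: cs, v =>
    if (c : ℕ) = b then c :: expandAux b cs v
    else match v with
      | [] => []
      | x :: xs => x.castSucc :: expandAux b cs xs

def expandBlocks (b n : ℕ) : ℕ → List (Fin b) → List (Fin (b + 1))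
  | 0, _ => []
  | k + 1, v =>
      expandAux b (champ b n) (v.take (elln b n)) ++ expandBlocks b n k (v.drop (elln b n))

/-- The expansion `e_n`, defined blockwise on words whose length is a multiple of `ℓ_n`. -/
def expand (b n : ℕ) (v : List (Fin b)) : List (Fin (b + 1)) :=
  expandBlocks b n (v.length / elln b n) v

/-- The prefix of length `n` of an infinite word. -/
def pref {α : Type*} (u : ℕ → α) (n : ℕ) : List α := (List.range n).map u

abbrev nonb (b : ℕ) : Fin (b+1) → Bool := fun x => decide ((x : ℕ) ≠ b)

lemma expandAux_length (b : ℕ) (p : List (Fin (b+1))) (v : List (Fin b))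
    (h : p.countP (nonb b) ≤ v.length) : (expandAux b p v).length = p.length := by
  induction p generalizing v with
  | nil => rfl
  | cons c cs ih =>
    rw [List.countP_cons] at h
    by_cases hc : (c : ℕ) = b
    · have hc' : nonb b c = false := by simp [nonb, hc]
      rw [hc'] at h; simp only [Bool.false_eq_true, if_false, Nat.add_zero] at h
      simp only [expandAux, if_pos hc, List.length_cons, ih _ h]
    · have hc' : nonb b c = true := by simp [nonb, hc]
      rw [hc'] at h; simp only [if_pos] at h
      cases v with
      | nil => simp at h
      | cons x xs =>
        simp only [List.length_cons, Nat.add_le_add_iff_right] at h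
        simp only [expandAux, if_neg hc, List.length_cons, ih _ h]

lemma expandAux_append (b : ℕ) (p q : List (Fin (b+1))) (v : List (Fin b))
    (h : p.countP (nonb b) ≤ v.length) :
    expandAux b (p ++ q) v =
      expandAux b p (v.take (p.countP (nonb b))) ++ expandAux b q (v.drop (p.countP (nonb b))) := by
  induction p generalizing v with
  | nil => simp [expandAux]
  | cons c cs ih =>
    rw [List.countP_cons] at h ⊢
    by_cases hc : (c : ℕ) = b
    · have hc' : nonb b c = false := by simp [nonb, hc]
      simp only [hc', Bool.false_eq_true, if_false, Nat.add_zero] at h ⊢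
      simp only [List.cons_append, expandAux, if_pos hc]
      exact congrArg _ (ih _ h)
    · have hc' : nonb b c = true := by simp [nonb, hc]
      simp only [hc', if_pos] at h ⊢
      cases v with
      | nil => simp at h
      | cons x xs =>
        simp only [List.length_cons, Nat.add_le_add_iff_right] at h
        simp only [List.cons_append, expandAux, if_neg hc, List.take_succ_cons, List.drop_succ_cons]
        exact congrArg _ (ih _ h)

lemma wc_nil (b : ℕ) : wc b [] = [] := rfl

lemma wc_cons (b : ℕ) (d : Fin (b+1)) (w : List (Fin (b+1))) :
    wc b (d :: w) = decide ((d : ℕ) = b) :: wc b w := rfl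

lemma red_nil (b : ℕ) : red b [] = [] := rfl

lemma red_cons_of_lt {b : ℕ} {d : Fin (b+1)} (w : List (Fin (b+1))) (h : (d : ℕ) < b) :
    red b (d :: w) = ⟨(d : ℕ), h⟩ :: red b w := by
  simp [red, List.filterMap_cons, dif_pos h]

lemma red_cons_of_ge {b : ℕ} {d : Fin (b+1)} (w : List (Fin (b+1))) (h : ¬ (d : ℕ) < b) :
    red b (d :: w) = red b w := by
  simp [red, List.filterMap_cons, dif_neg h]

lemma red_length (b : ℕ) (w : List (Fin (b+1))) :
    (red b w).length = w.countP (nonb b) := by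
  induction w with
  | nil => rfl
  | cons d w' ih =>
    rw [List.countP_cons]
    by_cases hd : (d : ℕ) = b
    · have h1 : ¬ (d : ℕ) < b := by omega
      have h2 : nonb b d = false := by simp [nonb, hd]
      rw [red_cons_of_ge _ h1, h2, ih]; simp
    · have h1 : (d : ℕ) < b := by have := d.isLt; omega
      have h2 : nonb b d = true := by simp [nonb, hd]
      rw [red_cons_of_lt _ h1, h2, List.length_cons, ih]; simp

lemma expandAux_eq_iff (b : ℕ) (p w : List (Fin (b+1))) (v : List (Fin b))
    (h : v.length = p.countP (nonb b)) :
    expandAux b p v = w ↔ (wc b w = wc b p ∧ red b w = v) := by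
  induction p generalizing v w with
  | nil =>
    have hv : v = [] := List.eq_nil_of_length_eq_zero (by simpa using h)
    subst hv
    constructor
    · rintro rfl; simp [expandAux, wc_nil, red_nil]
    · rintro ⟨hwc, hred⟩
      have : w = [] := by
        cases w with
        | nil => rfl
        | cons d w' => rw [wc_cons, wc_nil] at hwc; exact absurd hwc (by simp)
      simp [this, expandAux]
  | cons c cs ih =>
    rw [List.countP_cons] at h
    by_cases hc : (c : ℕ) = b
    · have hc' : nonb b c = false := by simp [nonb, hc]
      rw [hc'] at h; simp only [Bool.false_eq_true, if_false, Nat.add_zero] at h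
      simp only [expandAux, if_pos hc]
      cases w with
      | nil =>
        constructor
        · intro hcontra; exact absurd hcontra (by simp)
        · rintro ⟨hwc, -⟩; rw [wc_nil, wc_cons] at hwc; exact absurd hwc (by simp)
      | cons d w' =>
        rw [wc_cons, wc_cons]
        constructor
        · intro he
          rw [List.cons_eq_cons] at he
          obtain ⟨rfl, he2⟩ := he
          have hmain := (ih w' v h).mp he2
          have hdb : ¬ (c : ℕ) < b := by omega
          rw [red_cons_of_ge _ hdb]
          exact ⟨by rw [hmain.1], hmain.2⟩
        · rintro ⟨hwc, hred⟩
          rw [List.cons_eq_cons] at hwc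
          have hdb : (d : ℕ) = b := by
            have := hwc.1; rw [decide_eq_decide] at this; exact this.mpr hc
          have hdc : d = c := Fin.ext (by rw [hdb, hc])
          have hdb' : ¬ (d : ℕ) < b := by omega
          rw [red_cons_of_ge _ hdb'] at hred
          rw [hdc]
          exact List.cons_eq_cons.mpr ⟨rfl, (ih w' v h).mpr ⟨hwc.2, hred⟩⟩
    · have hc' : nonb b c = true := by simp [nonb, hc]
      rw [hc'] at h; simp only [if_pos] at h
      have hcb : (c : ℕ) < b := by have := c.isLt; omega
      cases v with
      | nil => simp at h
      | cons x xs =>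
        simp only [List.length_cons] at h
        have hxs : xs.length = cs.countP (nonb b) := by omega
        simp only [expandAux, if_neg hc]
        cases w with
        | nil =>
          constructor
          · intro hcontra; exact absurd hcontra (by simp)
          · rintro ⟨hwc, -⟩; rw [wc_nil, wc_cons] at hwc; exact absurd hwc (by simp)
        | cons d w' =>
          rw [wc_cons, wc_cons]
          constructor
          · intro he
            rw [List.cons_eq_cons] at he
            obtain ⟨rfl, he2⟩ := he
            have hmain := (ih w' xs hxs).mp he2
            have hdb : (x.castSucc : ℕ) < b := by simpa using x.isLt
            rw [red_cons_of_lt _ hdb]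
            refine ⟨?_, ?_⟩
            · rw [hmain.1]
              congr 1
              simp only [decide_eq_decide, Fin.coe_castSucc]
              constructor
              · intro hh; exact absurd hh (by omega)
              · intro hh; exact absurd hh hc
            · exact List.cons_eq_cons.mpr ⟨by ext; simp, hmain.2⟩
          · rintro ⟨hwc, hred⟩
            rw [List.cons_eq_cons] at hwc
            have hdb : (d : ℕ) ≠ b := by
              intro hh
              have := hwc.1; rw [decide_eq_decide] at this
              exact hc (this.mp hh)
            have hdb' : (d : ℕ) < b := by have := d.isLt; omega
            rw [red_cons_of_lt _ hdb', List.cons_eq_cons] at hred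
            rw [List.cons_eq_cons]
            constructor
            · ext
              simp only [Fin.coe_castSucc]
              have : ((⟨(d : ℕ), hdb'⟩ : Fin b) : ℕ) = (x : ℕ) := by rw [hred.1]
              simpa using this.symm
            · exact (ih w' xs hxs).mpr ⟨hwc.2, hred.2⟩

lemma alocc_nil {α : Type*} [DecidableEq α] (w : List α) : alocc [] w = 0 := by
  simp [alocc]

lemma alocc_append {α : Type*} [DecidableEq α] (x y w : List α)
    (hx : x.length = w.length) (hw : 0 < w.length) :
    alocc (x ++ y) w = (if x = w then 1 else 0) + alocc y w := by
  unfold alocc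
  have hlen : (x ++ y).length = y.length + w.length := by
    rw [List.length_append, hx]; omega
  rw [hlen, Nat.add_div_right _ hw, List.range_succ_eq_map]
  rw [List.filter_cons]
  have h0 : ((x ++ y).drop (0 * w.length)).take w.length = x := by
    rw [Nat.zero_mul, List.drop_zero, List.take_left' hx]
  have h1 : ∀ i : ℕ, ((x ++ y).drop ((i + 1) * w.length)).take w.length
      = ((y.drop (i * w.length)).take w.length) := by
    intro i
    have : (i + 1) * w.length = x.length + i * w.length := by rw [hx]; ring
    rw [this, List.drop_length_add_append]
  have h2 : (fun i => decide (((x ++ y).drop (i * w.length)).take w.length = w)) ∘ Nat.succ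
      = fun i => decide ((y.drop (i * w.length)).take w.length = w) := by
    funext i
    simp only [Function.comp_apply, Nat.succ_eq_add_one, h1]
  rw [List.filter_map, h2, h0]
  by_cases hxw : x = w <;> simp [hxw, Nat.add_comm]

lemma sum_indicator_ofFn (b m : ℕ) (l : List (Fin b)) (h : l.length = m) :
    (∑ v : Fin m → Fin b, if List.ofFn v = l then 1 else 0) = 1 := by
  subst h
  have hl : l = List.ofFn (fun i : Fin l.length => l[(i : ℕ)]) := (List.ofFn_getElem (xs := l)).symm
  calc (∑ v : Fin l.length → Fin b, if List.ofFn v = l then 1 else 0)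
      = ∑ v : Fin l.length → Fin b, if v = (fun i : Fin l.length => l[(i : ℕ)]) then 1 else 0 := by
        apply Finset.sum_congr rfl
        intro v _
        congr 1
        simp only [eq_iff_iff]
        constructor
        · intro hv; rw [← List.ofFn_inj]; rw [hv]; exact hl
        · intro hv; rw [hv]; exact hl.symm
    _ = 1 := by rw [Finset.sum_ite_eq' Finset.univ]; simp

lemma sum_split (b a c : ℕ) (F : List (Fin b) → ℕ) :
    ∑ u : Fin (a + c) → Fin b, F (List.ofFn u)
      = ∑ v1 : Fin a → Fin b, ∑ v2 : Fin c → Fin b, F (List.ofFn v1 ++ List.ofFn v2) := by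
  rw [Fintype.sum_equiv ((Equiv.arrowCongr finSumFinEquiv.symm (Equiv.refl (Fin b))).trans
      (Equiv.sumArrowEquivProdArrow (Fin a) (Fin c) (Fin b)))
    (fun u => F (List.ofFn u))
    (fun x => F (List.ofFn x.1 ++ List.ofFn x.2)) ?_, Fintype.sum_prod_type]
  intro u
  congr 1
  rw [List.ofFn_add]
  congr 1

lemma sum_split' (b a c K : ℕ) (hK : K = a + c) (F : List (Fin b) → ℕ) :
    ∑ u : Fin K → Fin b, F (List.ofFn u)
      = ∑ v1 : Fin a → Fin b, ∑ v2 : Fin c → Fin b, F (List.ofFn v1 ++ List.ofFn v2) := by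
  subst hK; exact sum_split b a c F

lemma countP_nonb_eq (b : ℕ) (l : List (Fin (b+1))) :
    l.countP (nonb b) = (wc b l).countP (fun y => !y) := by
  induction l with
  | nil => rfl
  | cons d l ih =>
    rw [wc_cons, List.countP_cons, List.countP_cons, ih]
    by_cases hd : (d : ℕ) = b <;> simp [nonb, hd]

lemma countP_nonb_eq_of_wc {b : ℕ} {p w : List (Fin (b+1))} (h : wc b p = wc b w) :
    p.countP (nonb b) = w.countP (nonb b) := by
  rw [countP_nonb_eq, countP_nonb_eq, h]

lemma list_le_sum (l : List ℕ) (x : ℕ) (hx : x ∈ l) : x ≤ l.sum := by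
  induction l with
  | nil => simp at hx
  | cons y l ih =>
    rcases List.mem_cons.mp hx with rfl | hm
    · simp
    · simp only [List.sum_cons]
      exact le_add_of_nonneg_of_le (Nat.zero_le _) (ih hm)

lemma main_induction (b n : ℕ) (hb : 0 < b) (hn : 0 < n) (w : List (Fin (b+1))) (hw : w.length = n)
    (P : List (List (Fin (b+1)))) (hP : ∀ p ∈ P, p.length = n) :
    ∑ u : Fin (P.flatten.countP (nonb b)) → Fin b,
        alocc (expandAux b P.flatten (List.ofFn u)) w
      = (P.countP (fun p => decide (wc b p = wc b w)))
          * b ^ (P.flatten.countP (nonb b) - w.countP (nonb b)) := by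
  induction P with
  | nil => simp [expandAux, alocc_nil]
  | cons p P' ih =>
    have hp : p.length = n := hP p List.mem_cons_self
    have hP' : ∀ q ∈ P', q.length = n := fun q hq => hP q (List.mem_cons_of_mem _ hq)
    have ihs := ih hP'
    set a := p.countP (nonb b) with ha
    set c := P'.flatten.countP (nonb b) with hc
    set k := w.countP (nonb b) with hk
    have hflat : (p :: P').flatten = p ++ P'.flatten := List.flatten_cons ..
    have hcount : ((p :: P').flatten).countP (nonb b) = a + c := by
      rw [hflat, List.countP_append]
    rw [sum_split' b a c _ hcount (fun l => alocc (expandAux b ((p :: P').flatten) l) w)]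
    have step : ∀ v1 : Fin a → Fin b, ∀ v2 : Fin c → Fin b,
        alocc (expandAux b ((p :: P').flatten) (List.ofFn v1 ++ List.ofFn v2)) w
          = (if expandAux b p (List.ofFn v1) = w then 1 else 0)
            + alocc (expandAux b P'.flatten (List.ofFn v2)) w := by
      intro v1 v2
      rw [hflat, expandAux_append b p P'.flatten _ (by simp [← ha]),
        ← ha, List.take_left' (by simp), List.drop_left' (by simp)]
      exact alocc_append _ _ _ (by rw [expandAux_length b p _ (by simp [← ha]), hp, hw]) (by omega)
    simp only [step]
    simp only [Finset.sum_add_distrib]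
    rw [Finset.sum_comm]
    have hS1 : (∑ x : Fin a → Fin b, if expandAux b p (List.ofFn x) = w then 1 else 0)
        = if wc b p = wc b w then 1 else 0 := by
      by_cases hpw : wc b p = wc b w
      · have hak : a = k := countP_nonb_eq_of_wc hpw
        have hrl : (red b w).length = a := by rw [red_length, ← hk, ← hak]
        rw [if_pos hpw]
        calc (∑ x : Fin a → Fin b, if expandAux b p (List.ofFn x) = w then 1 else 0)
            = ∑ x : Fin a → Fin b, if List.ofFn x = red b w then 1 else 0 := by
              apply Finset.sum_congr rfl
              intro x _
              congr 1
              rw [expandAux_eq_iff b p w (List.ofFn x) (by simp [← ha]), eq_iff_iff]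
              constructor
              · rintro ⟨-, hr⟩; exact hr.symm
              · intro hr; exact ⟨hpw.symm, hr.symm⟩
          _ = 1 := sum_indicator_ofFn b a (red b w) hrl
      · rw [if_neg hpw]
        apply Finset.sum_eq_zero
        intro x _
        rw [if_neg]
        rw [expandAux_eq_iff b p w (List.ofFn x) (by simp [← ha])]
        rintro ⟨hwcw, -⟩
        exact hpw hwcw.symm
    rw [hS1, ihs, hcount, List.countP_cons]
    simp only [Finset.sum_const, Finset.card_univ, Fintype.card_fun, Fintype.card_fin,
      smul_eq_mul]
    set C := List.countP (fun p => decide (wc b p = wc b w)) P' with hC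
    have hkc : C ≠ 0 → k ≤ c := by
      intro hC0
      obtain ⟨p', hp'mem, hp'⟩ := List.countP_pos_iff.mp (Nat.pos_of_ne_zero hC0)
      have hwcp' : wc b p' = wc b w := of_decide_eq_true hp'
      have h1 : k = p'.countP (nonb b) := (countP_nonb_eq_of_wc hwcp').symm
      rw [hc, List.countP_flatten, h1]
      exact list_le_sum _ _ (List.mem_map_of_mem hp'mem)
    by_cases hpw : wc b p = wc b w
    · have hak : a = k := countP_nonb_eq_of_wc hpw
      rw [if_pos hpw, if_pos (by simpa using hpw)]
      by_cases hC0 : C = 0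
      · simp [hC0, hak]
      · have hkle : k ≤ c := hkc hC0
        have e1 : a + c - k = c := by omega
        have e2 : b ^ a * b ^ (c - k) = b ^ c := by
          rw [← pow_add]; congr 1; omega
        rw [e1, ← e2]
        ring
    · rw [if_neg hpw, if_neg (by simpa using hpw)]
      by_cases hC0 : C = 0
      · simp [hC0]
      · have hkle : k ≤ c := hkc hC0
        have e2 : b ^ a * b ^ (c - k) = b ^ (a + c - k) := by
          rw [← pow_add]; congr 1; omega
        rw [← e2]
        ring

lemma lexWord_length (b n i : ℕ) : (lexWord b n i).length = n := by
  simp [lexWord]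

/-- The equiv sending `f` to the number whose base-(b+1) digits (most significant first)
are `f 0, f 1, ...`. -/
def digitEquiv (b n : ℕ) : (Fin n → Fin (b + 1)) ≃ Fin ((b + 1) ^ n) :=
  (Equiv.arrowCongr (Fin.revPerm) (Equiv.refl (Fin (b + 1)))).trans finFunctionFinEquiv

lemma lexWord_digitEquiv (b n : ℕ) (f : Fin n → Fin (b + 1)) :
    lexWord b n ((digitEquiv b n f : Fin ((b+1)^n)) : ℕ) = List.ofFn f := by
  apply List.ext_getElem (by simp [lexWord_length])
  intro j h1 h2
  simp only [List.length_ofFn] at h2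
  simp only [lexWord, List.getElem_map, List.getElem_range, List.getElem_ofFn]
  have hfin : n - 1 - j < n := by omega
  have key := congrFun (finFunctionFinEquiv.symm_apply_apply (f ∘ Fin.rev)) ⟨n - 1 - j, hfin⟩
  have keyv : ((finFunctionFinEquiv.symm (finFunctionFinEquiv (f ∘ Fin.rev))) ⟨n - 1 - j, hfin⟩ : ℕ)
      = ((f ∘ Fin.rev) ⟨n - 1 - j, hfin⟩ : ℕ) := by rw [key]
  have hsymm : ((finFunctionFinEquiv.symm (finFunctionFinEquiv (f ∘ Fin.rev))) ⟨n - 1 - j, hfin⟩ : ℕ)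
      = ((finFunctionFinEquiv (f ∘ Fin.rev) : ℕ) / (b + 1) ^ (n - 1 - j)) % (b + 1) := rfl
  have hde : ((digitEquiv b n f : Fin ((b+1)^n)) : ℕ) = (finFunctionFinEquiv (f ∘ Fin.rev) : ℕ) := by
    simp [digitEquiv, Equiv.arrowCongr]
  apply Fin.ext
  show (((digitEquiv b n) f : Fin ((b+1)^n)) : ℕ) / (b + 1) ^ (n - 1 - j) % (b + 1)
    = (f ⟨j, h2⟩ : ℕ)
  rw [hsymm] at keyv
  rw [hde, keyv]
  show ((f ∘ Fin.rev) ⟨n - 1 - j, hfin⟩ : ℕ) = _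
  have hrev : Fin.rev (⟨n - 1 - j, hfin⟩ : Fin n) = ⟨j, h2⟩ := by
    apply Fin.ext
    simp [Fin.val_rev]
    omega
  simp [hrev]

lemma sum_map_ite (l : List Bool) (p : Bool → Bool) :
    (l.map (fun x => if p x then (1:ℕ) else 0)).sum = l.countP p := by
  induction l with
  | nil => rfl
  | cons x l ih =>
    rw [List.map_cons, List.sum_cons, List.countP_cons, ih]
    by_cases h : p x <;> simp [h] <;> omega

lemma countP_eq_card (l : List Bool) :
    (Finset.univ.filter (fun j : Fin l.length => ¬ (l.get j = true))).card
      = l.countP (fun y => !y) := by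
  rw [Finset.card_filter]
  have h1 : (∑ j : Fin l.length, if ¬ (l.get j = true) then (1:ℕ) else 0)
      = (List.ofFn (fun j : Fin l.length => if (fun y => !y) (l.get j) = true then (1:ℕ) else 0)).sum := by
    rw [List.sum_ofFn]
    apply Finset.sum_congr rfl
    intro j _
    by_cases h : l.get j <;> simp [h]
  rw [h1]
  have h2 : (List.ofFn (fun j : Fin l.length => if (fun y => !y) (l.get j) = true then (1:ℕ) else 0))
      = l.map (fun x => if (fun y => !y) x = true then (1:ℕ) else 0) := by
    conv_rhs => rw [← List.ofFn_get l]
    rw [List.map_ofFn]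
    rfl
  rw [h2, sum_map_ite]

lemma count_codes (b m : ℕ) (l : List Bool) :
    (∑ f : Fin l.length → Fin (b+1),
      if List.ofFn (fun j => decide ((f j : ℕ) = b)) = l then (1:ℕ) else 0)
      = b ^ (l.countP (fun y => !y)) := by
  have cond_iff : ∀ f : Fin l.length → Fin (b+1),
      (List.ofFn (fun j => decide ((f j : ℕ) = b)) = l)
        ↔ ∀ j : Fin l.length, decide ((f j : ℕ) = b) = l.get j := by
    intro f
    have hre : (List.ofFn (fun j => decide ((f j : ℕ) = b)) = l)
        ↔ (List.ofFn (fun j => decide ((f j : ℕ) = b)) = List.ofFn l.get) := by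
      rw [List.ofFn_get]
    rw [hre, List.ofFn_inj, funext_iff]
  have step1 : ∀ f : Fin l.length → Fin (b+1),
      (if List.ofFn (fun j => decide ((f j : ℕ) = b)) = l then (1:ℕ) else 0)
        = ∏ j : Fin l.length, if decide ((f j : ℕ) = b) = l.get j then (1:ℕ) else 0 := by
    intro f
    rw [Finset.prod_boole]
    by_cases h : List.ofFn (fun j => decide ((f j : ℕ) = b)) = l
    · rw [if_pos h, if_pos (fun j _ => (cond_iff f).mp h j)]
    · rw [if_neg h, if_neg]
      intro hcontra
      exact h ((cond_iff f).mpr (fun j => hcontra j (Finset.mem_univ j)))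
  simp only [step1]
  have swap : (∑ f : Fin l.length → Fin (b+1),
        ∏ j : Fin l.length, if decide ((f j : ℕ) = b) = l.get j then (1:ℕ) else 0)
      = ∏ j : Fin l.length, ∑ x : Fin (b+1), if decide ((x : ℕ) = b) = l.get j then (1:ℕ) else 0 := by
    rw [Finset.prod_univ_sum]
    rw [← Fintype.piFinset_univ]
  rw [swap]
  have coord : ∀ cj : Bool, (∑ x : Fin (b+1), if decide ((x : ℕ) = b) = cj then (1:ℕ) else 0)
      = if cj then 1 else b := by
    intro cj
    cases cj
    · simp only [decide_eq_false_iff_not, Bool.false_eq_true, if_false]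
      rw [Finset.sum_boole]
      have : Finset.univ.filter (fun x : Fin (b+1) => ¬ (x : ℕ) = b)
          = Finset.univ.erase (Fin.last b) := by
        ext x
        simp [Fin.ext_iff, Fin.val_last, eq_comm]
      rw [this, Finset.card_erase_of_mem (Finset.mem_univ _), Finset.card_univ, Fintype.card_fin]
      simp
    · simp only [decide_eq_true_eq, if_true]
      have : ∀ x : Fin (b+1), ((x : ℕ) = b) ↔ x = Fin.last b := by
        intro x; rw [Fin.ext_iff, Fin.val_last]
      simp only [this]
      rw [Finset.sum_ite_eq' Finset.univ]
      simp
  simp only [coord]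
  rw [Finset.prod_ite]
  simp only [Finset.prod_const_one, Finset.prod_const, one_mul]
  rw [countP_eq_card]

lemma count_codes' (b n : ℕ) (l : List Bool) (hl : l.length = n) :
    (∑ f : Fin n → Fin (b+1),
      if List.ofFn (fun j => decide ((f j : ℕ) = b)) = l then (1:ℕ) else 0)
      = b ^ (l.countP (fun y => !y)) := by
  subst hl
  exact count_codes b 0 l

lemma countP_range (N : ℕ) (p : ℕ → Bool) :
    (List.range N).countP p = ∑ i ∈ Finset.range N, if p i then (1:ℕ) else 0 := by
  induction N with
  | zero => rfl
  | succ N ih =>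
    rw [List.range_succ, List.countP_append, Finset.sum_range_succ, ih]
    simp [List.countP_cons]

lemma wc_eq_map (b : ℕ) (v : List (Fin (b+1))) :
    wc b v = v.map (fun x => decide (x.val = b)) := by
  induction v with
  | nil => rfl
  | cons d v ih => rw [wc_cons, List.map_cons, ih]

lemma wc_ofFn (b n : ℕ) (f : Fin n → Fin (b+1)) :
    wc b (List.ofFn f) = List.ofFn (fun j => decide ((f j : ℕ) = b)) := by
  rw [wc_eq_map, List.map_ofFn]
  rfl

lemma count_lex (b n : ℕ) (w : List (Fin (b+1))) (hw : w.length = n) :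
    ((List.range ((b+1)^n)).map (lexWord b n)).countP
        (fun p => decide (wc b p = wc b w))
      = b ^ (w.countP (nonb b)) := by
  rw [List.countP_map, countP_range, ← Fin.sum_univ_eq_sum_range
    (fun i => if ((fun p => decide (wc b p = wc b w)) ∘ lexWord b n) i then (1:ℕ) else 0)]
  rw [← Equiv.sum_comp (digitEquiv b n)
    (fun i : Fin ((b+1)^n) =>
      if ((fun p => decide (wc b p = wc b w)) ∘ lexWord b n) (i : ℕ) then (1:ℕ) else 0)]
  have hstep : ∀ f : Fin n → Fin (b+1),
      (if ((fun p => decide (wc b p = wc b w)) ∘ lexWord b n) ((digitEquiv b n f : Fin ((b+1)^n)) : ℕ) then (1:ℕ) else 0)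
        = if List.ofFn (fun j => decide ((f j : ℕ) = b)) = wc b w then (1:ℕ) else 0 := by
    intro f
    simp only [Function.comp_apply, lexWord_digitEquiv, wc_ofFn, decide_eq_true_eq]
  simp only [hstep]
  rw [count_codes' b n (wc b w) (by simp [wc_eq_map, hw]), ← countP_nonb_eq]

lemma lexWord_zero_countP (b n : ℕ) (hb : 0 < b) :
    (lexWord b n 0).countP (nonb b) = n := by
  have hlen : (lexWord b n 0).length = n := lexWord_length b n 0
  conv_rhs => rw [← hlen]
  rw [List.countP_eq_length]
  · intro a ha
    simp only [lexWord, List.mem_map] at ha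
    obtain ⟨j, -, rfl⟩ := ha
    simp [nonb, Nat.zero_div]
    omega


lemma main_induction' (b n : ℕ) (hb : 0 < b) (hn : 0 < n) (w : List (Fin (b+1))) (hw : w.length = n)
    (P : List (List (Fin (b+1)))) (hP : ∀ p ∈ P, p.length = n)
    (K : ℕ) (hK : K = P.flatten.countP (nonb b)) :
    ∑ u : Fin K → Fin b, alocc (expandAux b P.flatten (List.ofFn u)) w
      = (P.countP (fun p => decide (wc b p = wc b w)))
          * b ^ (K - w.countP (nonb b)) := by
  subst hK
  exact main_induction b n hb hn w hw P hP

lemma countP_bind_val (b : ℕ) (l : List (Fin (b+1))) :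
    List.countP (fun x => decide (x ≠ b)) (do let a ← l; pure ((a : ℕ))) = l.countP (nonb b) := by
  induction l with
  | nil => rfl
  | cons d l ih =>
    show List.countP _ ((d : ℕ) :: (do let a ← l; pure ((a : ℕ)))) = _
    rw [List.countP_cons, List.countP_cons, ih]

theorem stmt6 (b n : ℕ) (hb : 0 < b) (hn : 0 < n)
    (w : List (Fin (b + 1))) (hw : w.length = n) :
    ∑ u : Fin (elln b n) → Fin b, alocc (expand b n (List.ofFn u)) w = b ^ (elln b n) := by
  have hNpos : 0 < (b+1)^n := pow_pos (by omega) n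
  have helln : elln b n = (((List.range ((b+1)^n)).map (lexWord b n)).flatten).countP (nonb b) :=
    countP_bind_val b (champ b n)
  have hn_le : n ≤ elln b n := by
    have h1 : (b+1)^n = ((b+1)^n - 1) + 1 := by omega
    rw [helln, h1, List.range_succ_eq_map, List.map_cons, List.flatten_cons, List.countP_append]
    have h2 := lexWord_zero_countP b n hb
    omega
  have hellnpos : 0 < elln b n := lt_of_lt_of_le hn hn_le
  have hexp : ∀ u : Fin (elln b n) → Fin b,
      expand b n (List.ofFn u) = expandAux b (champ b n) (List.ofFn u) := by
    intro u
    unfold expand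
    rw [List.length_ofFn, Nat.div_self hellnpos]
    show expandAux b (champ b n) ((List.ofFn u).take (elln b n))
        ++ expandBlocks b n 0 ((List.ofFn u).drop (elln b n)) = _
    rw [show expandBlocks b n 0 ((List.ofFn u).drop (elln b n)) = [] from rfl, List.append_nil]
    congr 1
    exact List.take_of_length_le (by simp)
  have hP : ∀ p ∈ (List.range ((b+1)^n)).map (lexWord b n), p.length = n := by
    intro p hp
    obtain ⟨i, -, rfl⟩ := List.mem_map.mp hp
    exact lexWord_length b n i
  have hmain := main_induction' b n hb hn w hw ((List.range ((b+1)^n)).map (lexWord b n)) hP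
    (elln b n) helln
  have hLHS : ∑ u : Fin (elln b n) → Fin b, alocc (expand b n (List.ofFn u)) w
      = ∑ u : Fin (elln b n) → Fin b, alocc (expandAux b (champ b n) (List.ofFn u)) w :=
    Finset.sum_congr rfl (fun u _ => by rw [hexp u])
  rw [hLHS]
  calc (∑ u : Fin (elln b n) → Fin b, alocc (expandAux b (champ b n) (List.ofFn u)) w)
      = (((List.range ((b+1)^n)).map (lexWord b n)).countP (fun p => decide (wc b p = wc b w)))
          * b ^ (elln b n - w.countP (nonb b)) := hmain
    _ = b ^ (w.countP (nonb b)) * b ^ (elln b n - w.countP (nonb b)) := by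
        rw [count_lex b n w hw]
    _ = b ^ (elln b n) := by
        rw [← pow_add]
        congr 1
        have hk_le : w.countP (nonb b) ≤ n := hw ▸ List.countP_le_length
        omega
end

section
/- Let C be an alphabet of size k, and m, n ∈ ℕ. If a word v over C of length a multiple of mn satisfies Δ_{C,mn}(v) < ε, then Δ_{C,n}(v) < k^{(m−1)n}·ε. -/
open Filter Topology

private lemma list_filter_range_length (K : ℕ) (p : ℕ → Prop) [DecidablePred p] :
    ((List.range K).filter (fun i => decide (p i))).length
      = ((Finset.range K).filter p).card := by
  induction K with
  | zero => simp
  | succ K ih =>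
    rw [List.range_succ, Finset.range_add_one, List.filter_append, Finset.filter_insert]
    by_cases hp : p K
    · rw [if_pos hp, List.length_append, ih, Finset.card_insert_of_notMem (by simp)]
      simp [hp]
    · rw [if_neg hp, List.length_append, ih]; simp [hp]

private lemma alocc_card {α : Type*} [DecidableEq α] (u w : List α) :
    alocc u w = ((Finset.range (u.length / w.length)).filter
      (fun i => (u.drop (i * w.length)).take w.length = w)).card := by
  rw [alocc, list_filter_range_length]

private lemma sum_range_mul {M : Type*} [AddCommMonoid M] (f : ℕ → M) (N m : ℕ) :
    ∑ i ∈ Finset.range (N * m), f i = ∑ q ∈ Finset.range N, ∑ r ∈ Finset.range m, f (q * m + r) := by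
  induction N with
  | zero => simp
  | succ N ih =>
    rw [Nat.succ_mul, Finset.sum_range_add, ih, Finset.sum_range_succ]

/-- The word of length `m*n` with `m` slices of length `n` given by `g`. -/
private def toWord {k : ℕ} (m : ℕ) {n : ℕ} (hn : 0 < n) (g : Fin m → Fin n → Fin k) :
    List (Fin k) :=
  List.ofFn (fun i : Fin (m * n) =>
    g ⟨(i : ℕ) / n, (Nat.div_lt_iff_lt_mul hn).2 i.2⟩
      ⟨(i : ℕ) % n, Nat.mod_lt _ hn⟩)

private lemma toWord_length {k : ℕ} (m : ℕ) {n : ℕ} (hn : 0 < n) (g : Fin m → Fin n → Fin k) :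
    (toWord m hn g).length = m * n := by simp [toWord]

private lemma toWord_getElem {k : ℕ} (m : ℕ) {n : ℕ} (hn : 0 < n) (g : Fin m → Fin n → Fin k)
    (i : ℕ) (hi : i < (toWord m hn g).length) :
    (toWord m hn g)[i] = g ⟨i / n, (Nat.div_lt_iff_lt_mul hn).2 (by
        simpa [toWord_length] using hi)⟩ ⟨i % n, Nat.mod_lt _ hn⟩ := by
  simp [toWord]

private lemma toWord_slice {k : ℕ} (m : ℕ) {n : ℕ} (hn : 0 < n) (g : Fin m → Fin n → Fin k)
    (r : Fin m) :
    ((toWord m hn g).drop ((r : ℕ) * n)).take n = List.ofFn (g r) := by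
  have hc : (r : ℕ) * n + n ≤ m * n := by
    have hr := r.2
    calc (r:ℕ) * n + n = ((r:ℕ)+1) * n := by ring
    _ ≤ m * n := Nat.mul_le_mul_right _ (by omega)
  apply List.ext_getElem
  · simp only [List.length_take, List.length_drop, toWord_length, List.length_ofFn]
    omega
  · intro j h1 h2
    simp only [List.getElem_take, List.getElem_drop, List.getElem_ofFn]
    have hj : j < n := by simpa using h2
    have hidx : (r : ℕ) * n + j < (toWord m hn g).length := by
      simp only [toWord_length]; omega
    rw [toWord_getElem m hn g _ hidx]
    congr 1
    · apply Fin.ext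
      simp only
      rw [mul_comm, Nat.mul_add_div hn, Nat.div_eq_of_lt hj, add_zero]
    · apply Fin.ext
      simp only
      rw [mul_comm, Nat.mul_add_mod, Nat.mod_eq_of_lt hj]

private lemma toWord_inj {k : ℕ} (m : ℕ) {n : ℕ} (hn : 0 < n)
    {g g' : Fin m → Fin n → Fin k} (hgg : toWord m hn g = toWord m hn g') : g = g' := by
  funext r
  have := congrArg (fun l => (List.drop ((r : ℕ) * n) l).take n) hgg
  simp only [toWord_slice] at this
  exact List.ofFn_inj.1 this

private def fixEquiv {m : ℕ} {β : Type*} (r : Fin m) (y : β) :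
    {g : Fin m → β // g r = y} ≃ ({j : Fin m // j ≠ r} → β) where
  toFun g j := g.1 j
  invFun h := ⟨fun j => if hj : j = r then y else h ⟨j, hj⟩, by simp⟩
  left_inv g := by
    ext j
    by_cases hj : j = r
    · subst hj; simp [g.2]
    · simp [hj]
  right_inv h := by
    ext j
    simp [j.2]

private lemma card_fix {k m n : ℕ} (hm : 0 < m) (r : Fin m) (y : Fin n → Fin k) :
    (Finset.univ.filter (fun g : Fin m → Fin n → Fin k => g r = y)).card
      = k ^ ((m - 1) * n) := by
  rw [← Fintype.card_subtype]
  rw [Fintype.card_congr (fixEquiv r y), Fintype.card_fun, Fintype.card_fun,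
    Fintype.card_fin, Fintype.card_fin]
  have : Fintype.card {j : Fin m // j ≠ r} = m - 1 := by
    rw [Fintype.card_subtype_compl, Fintype.card_subtype_eq, Fintype.card_fin]
  rw [this, ← pow_mul, Nat.mul_comm n (m-1)]

theorem stmt8 (k m n : ℕ) (hk : 0 < k) (hm : 0 < m) (hn : 0 < n)
    (v : List (Fin k)) (hv : (m * n) ∣ v.length) (ε : ℝ) (hε : 0 < ε)
    (h : ∀ w : List (Fin k), w.length = m * n →
      |(alocc v w : ℝ) / ((v.length / (m * n) : ℕ) : ℝ) - 1 / (k : ℝ) ^ (m * n)| < ε) :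
    ∀ w : List (Fin k), w.length = n →
      |(alocc v w : ℝ) / ((v.length / n : ℕ) : ℝ) - 1 / (k : ℝ) ^ n|
        < (k : ℝ) ^ ((m - 1) * n) * ε := by
  classical
  intro w hw
  have hkR : (0:ℝ) < (k:ℝ) := by exact_mod_cast hk
  have hexp : (m - 1) * n + n = m * n := by
    have h1 : m - 1 + 1 = m := Nat.succ_pred_eq_of_pos hm
    calc (m-1)*n + n = ((m-1)+1)*n := by ring
    _ = m*n := by rw [h1]
  have hDK : (k:ℝ) ^ ((m-1)*n) * (k:ℝ)^n = (k:ℝ)^(m*n) := by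
    rw [← pow_add, hexp]
  set L := v.length with hLdef
  set N := L / (m * n) with hNdef
  have hL : L = N * (m * n) := (Nat.div_mul_cancel hv).symm
  have hLn : L / n = N * m := by
    rw [hL, ← mul_assoc, Nat.mul_div_cancel _ hn]
  by_cases hN0 : N = 0
  · -- degenerate case : v is empty
    have hL0 : L = 0 := by rw [hL, hN0, zero_mul]
    have hv0 : v = [] := List.length_eq_zero_iff.1 hL0
    have h0 : ∀ u : List (Fin k), alocc v u = 0 := by
      intro u; simp [alocc, hv0]
    have hw0 := h (List.replicate (m*n) ⟨0, hk⟩) (by simp)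
    rw [h0] at hw0
    have hN' : ((L / (m*n) : ℕ) : ℝ) = 0 := by rw [← hNdef, hN0]; simp
    rw [hN'] at hw0
    simp only [Nat.cast_zero, div_zero, zero_sub, abs_neg] at hw0
    have hwε : 1 / (k:ℝ)^(m*n) < ε := by
      rwa [abs_of_pos (by positivity)] at hw0
    rw [h0, hLn, hN0]
    simp only [zero_mul, Nat.cast_zero, CharP.cast_eq_zero, div_zero, zero_sub, abs_neg,
      Nat.cast_ofNat]
    rw [abs_of_pos (by positivity)]
    have : (1:ℝ)/(k:ℝ)^n = (k:ℝ)^((m-1)*n) * (1/(k:ℝ)^(m*n)) := by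
      rw [← hDK]; field_simp
    rw [this]
    exact mul_lt_mul_of_pos_left hwε (by positivity)
  have hNpos : 0 < N := Nat.pos_of_ne_zero hN0
  -- the target word as a function
  set w' : Fin n → Fin k := fun j => w.get (Fin.cast hw.symm j) with hw'def
  have hw' : List.ofFn w' = w := by
    apply List.ext_getElem
    · simp [hw]
    · intro i h1 h2
      simp [hw'def]
  set c : (Fin m → Fin n → Fin k) → ℕ :=
    fun g => (Finset.univ.filter (fun r => g r = w')).card with hcdef
  set F : ℕ → Fin m → Fin n → Fin k :=
    fun q r j => v.getD (q*(m*n) + (r:ℕ)*n + (j:ℕ)) ⟨0,hk⟩ with hFdef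
  have hblock : ∀ q < N, (v.drop (q*(m*n))).take (m*n) = toWord m hn (F q) := by
    intro q hq
    have hle : q*(m*n) + (m*n) ≤ L := by
      calc q*(m*n) + m*n = (q+1)*(m*n) := by ring
      _ ≤ N*(m*n) := Nat.mul_le_mul_right _ (by omega)
      _ = L := hL.symm
    apply List.ext_getElem
    · simp only [List.length_take, List.length_drop, toWord_length]
      omega
    · intro i h1 h2
      have hi : i < m*n := by simpa [toWord_length] using h2
      have hidx : q*(m*n) + i < L := by omega
      rw [List.getElem_take, List.getElem_drop, toWord_getElem]
      simp only [hFdef]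
      have hdm : (i/n)*n + i%n = i := by rw [mul_comm]; exact Nat.div_add_mod i n
      have hlt : q*(m*n) + (i/n)*n + i%n < L := by omega
      rw [List.getD_eq_getElem _ _ hlt]
      simp only [show q*(m*n) + (i/n)*n + i%n = q*(m*n) + i from by omega]
  have hslice : ∀ (q : ℕ) (r : Fin m),
      (v.drop ((q*m+(r:ℕ))*n)).take n
        = (((v.drop (q*(m*n))).take (m*n)).drop ((r:ℕ)*n)).take n := by
    intro q r
    have hr : (r:ℕ)*n + n ≤ m*n := by
      calc (r:ℕ)*n + n = ((r:ℕ)+1)*n := by ring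
      _ ≤ m*n := Nat.mul_le_mul_right _ (by have := r.2; omega)
    rw [List.drop_take, List.take_take, List.drop_drop]
    rw [show min n (m*n - (r:ℕ)*n) = n from by omega]
    congr 2
    ring
  have hfiber : ∀ g : Fin m → Fin n → Fin k,
      ((Finset.range N).filter (fun q => F q = g)).card = alocc v (toWord m hn g) := by
    intro g
    rw [alocc_card]
    simp only [toWord_length]
    rw [← hLdef, ← hNdef]
    congr 1
    apply Finset.filter_congr
    intro q hq
    rw [Finset.mem_range] at hq
    rw [hblock q hq]
    constructor
    · intro hgg; rw [hgg]
    · exact toWord_inj m hn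
  have hA : alocc v w = ∑ g : Fin m → Fin n → Fin k, alocc v (toWord m hn g) * c g := by
    rw [alocc_card, hw, ← hLdef, hLn, Finset.card_filter, sum_range_mul]
    have hinner : ∀ q ∈ Finset.range N,
        (∑ r ∈ Finset.range m, if (v.drop ((q*m+r)*n)).take n = w then 1 else 0) = c (F q) := by
      intro q hq
      rw [Finset.mem_range] at hq
      simp only [hcdef]
      rw [Finset.card_filter, ← Fin.sum_univ_eq_sum_range
        (fun r => if (v.drop ((q*m+r)*n)).take n = w then 1 else 0) m]
      apply Finset.sum_congr rfl
      intro r _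
      congr 1
      rw [hslice q r, hblock q hq, toWord_slice, ← hw', eq_iff_iff]
      exact ⟨fun hh => List.ofFn_inj.1 hh, fun hh => by rw [hh]⟩
    rw [Finset.sum_congr rfl hinner]
    rw [← Finset.sum_fiberwise (Finset.range N) F (fun q => c (F q))]
    apply Finset.sum_congr rfl
    intro g _
    have : ∀ q ∈ (Finset.range N).filter (fun q => F q = g), c (F q) = c g := by
      intro q hq
      rw [Finset.mem_filter] at hq
      rw [hq.2]
    rw [Finset.sum_congr rfl this, Finset.sum_const, hfiber g, smul_eq_mul]
  have hB : ∑ g : Fin m → Fin n → Fin k, c g = m * k^((m-1)*n) := by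
    simp only [hcdef, Finset.card_filter]
    rw [Finset.sum_comm]
    have hr : ∀ r : Fin m,
        (∑ g : Fin m → Fin n → Fin k, if g r = w' then 1 else 0) = k^((m-1)*n) := by
      intro r
      rw [← Finset.card_filter]
      exact card_fix hm r w'
    rw [Finset.sum_congr rfl (fun r _ => hr r), Finset.sum_const, Finset.card_univ,
      Fintype.card_fin, smul_eq_mul]
  -- real estimates
  have hd : ∀ g : Fin m → Fin n → Fin k,
      |(alocc v (toWord m hn g) : ℝ) / (N : ℝ) - 1 / (k : ℝ) ^ (m*n)| < ε := by
    intro g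
    exact h (toWord m hn g) (toWord_length m hn g)
  have hmR : (0:ℝ) < (m:ℝ) := by exact_mod_cast hm
  have hNR : (0:ℝ) < (N:ℝ) := by exact_mod_cast hNpos
  have key : (alocc v w : ℝ) / ((L/n : ℕ) : ℝ) - 1/(k:ℝ)^n
      = ∑ g : Fin m → Fin n → Fin k,
          ((c g : ℝ)/m) * ((alocc v (toWord m hn g) : ℝ)/(N:ℝ) - 1/(k:ℝ)^(m*n)) := by
    have e1 : ∑ g : Fin m → Fin n → Fin k,
          ((c g : ℝ)/m) * ((alocc v (toWord m hn g) : ℝ)/(N:ℝ) - 1/(k:ℝ)^(m*n))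
        = (∑ g : Fin m → Fin n → Fin k, (c g : ℝ) * (alocc v (toWord m hn g) : ℝ))/((N:ℝ)*m)
          - (∑ g : Fin m → Fin n → Fin k, (c g : ℝ))/((m:ℝ) * (k:ℝ)^(m*n)) := by
      rw [Finset.sum_div, Finset.sum_div, ← Finset.sum_sub_distrib]
      apply Finset.sum_congr rfl
      intro g _
      have hkn : ((k:ℝ)^(m*n)) ≠ 0 := by positivity
      field_simp
    rw [e1]
    have e2 : (∑ g : Fin m → Fin n → Fin k, (c g : ℝ) * (alocc v (toWord m hn g) : ℝ))
        = (alocc v w : ℝ) := by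
      rw [hA]; push_cast
      apply Finset.sum_congr rfl
      intro g _; ring
    have e3 : (∑ g : Fin m → Fin n → Fin k, (c g : ℝ)) = (m:ℝ) * (k:ℝ)^((m-1)*n) := by
      rw [← Nat.cast_sum, hB]; push_cast; ring
    rw [e2, e3, hLn]
    push_cast
    rw [mul_div_mul_left _ _ (ne_of_gt hmR)]
    congr 1
    rw [← hDK]
    have hD : ((k:ℝ)^((m-1)*n)) ≠ 0 := by positivity
    have hkn : ((k:ℝ)^n) ≠ 0 := by positivity
    field_simp
  rw [key]
  have hstep1 : |∑ g : Fin m → Fin n → Fin k,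
        ((c g : ℝ)/m) * ((alocc v (toWord m hn g) : ℝ)/(N:ℝ) - 1/(k:ℝ)^(m*n))|
      ≤ ∑ g : Fin m → Fin n → Fin k,
        ((c g : ℝ)/m) * |(alocc v (toWord m hn g) : ℝ)/(N:ℝ) - 1/(k:ℝ)^(m*n)| := by
    refine le_trans (Finset.abs_sum_le_sum_abs _ _) (le_of_eq ?_)
    apply Finset.sum_congr rfl
    intro g _
    rw [abs_mul, abs_of_nonneg (div_nonneg (Nat.cast_nonneg _) (Nat.cast_nonneg _))]
  have hstep2 : ∑ g : Fin m → Fin n → Fin k,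
        ((c g : ℝ)/m) * |(alocc v (toWord m hn g) : ℝ)/(N:ℝ) - 1/(k:ℝ)^(m*n)|
      < ∑ g : Fin m → Fin n → Fin k, ((c g : ℝ)/m) * ε := by
    apply Finset.sum_lt_sum
    · intro g _
      exact mul_le_mul_of_nonneg_left (le_of_lt (hd g)) (div_nonneg (Nat.cast_nonneg _) (Nat.cast_nonneg _))
    · refine ⟨fun _ => w', Finset.mem_univ _, ?_⟩
      have hc0 : c (fun _ => w') = m := by
        rw [hcdef]
        simp
      apply mul_lt_mul_of_pos_left (hd _)
      rw [hc0]
      positivity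
  have hstep3 : ∑ g : Fin m → Fin n → Fin k, ((c g : ℝ)/m) * ε
      = (k:ℝ)^((m-1)*n) * ε := by
    rw [← Finset.sum_mul, ← Finset.sum_div, ← Nat.cast_sum, hB]
    push_cast
    field_simp
  calc |∑ g : Fin m → Fin n → Fin k,
        ((c g : ℝ)/m) * ((alocc v (toWord m hn g) : ℝ)/(N:ℝ) - 1/(k:ℝ)^(m*n))|
      ≤ _ := hstep1
    _ < _ := hstep2
    _ = _ := hstep3
end

section
/- (Hot Spot Lemma) An infinite word x over a finite alphabet A is normal if and only if there exists a positive constant C such that for every length ℓ and every word u of length ℓ, limsup_{n→∞} occ(x[1,n], u)/n < C/|A|^ℓ. -/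
open Filter Topology

namespace HotSpotAux
open Finset

variable {k : ℕ}

lemma pref_length {α : Type*} (x : ℕ → α) (n : ℕ) : (pref x n).length = n := by
  simp [pref]

/-- list-filter-range to finset-filter-range bridge -/
lemma length_filter_range (n : ℕ) (p : ℕ → Prop) [DecidablePred p] :
    ((List.range n).filter (fun i => decide (p i))).length
      = ((Finset.range n).filter p).card := by
  rfl

/-- segment of a prefix as ofFn -/
lemma seg_pref {α : Type*} (x : ℕ → α) {n a t : ℕ} (h : a + t ≤ n) :
    ((pref x n).drop a).take t = List.ofFn (fun i : Fin t => x (a + i)) := by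
  apply List.ext_getElem
  · simp [pref]; omega
  · intro i h1 h2
    simp only [List.getElem_take, List.getElem_drop, List.getElem_ofFn]
    simp only [pref, List.getElem_map, List.getElem_range]

/-- segment of an ofFn word -/
lemma seg_ofFn {α : Type*} {L : ℕ} (f : Fin L → α) {r t : ℕ} (h : r + t ≤ L) :
    ((List.ofFn f).drop r).take t
      = List.ofFn (fun i : Fin t => f ⟨r + i, by omega⟩) := by
  apply List.ext_getElem
  · simp; omega
  · intro i h1 h2
    simp only [List.getElem_take, List.getElem_drop, List.getElem_ofFn]

lemma ofFn_eq_iff {α : Type*} {t : ℕ} {g : Fin t → α} {u : List α} (hu : u.length = t) :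
    List.ofFn g = u ↔ ∀ j : Fin t, g j = u[(j : ℕ)]'(by omega) := by
  constructor
  · intro h j
    subst h
    simp
  · intro h
    apply List.ext_getElem
    · simp [hu]
    · intro i h1 h2
      simp only [List.getElem_ofFn]
      exact h ⟨i, by omega⟩

end HotSpotAux
namespace HotSpotAux
open Finset

/-- the `j`-th block of length `L` of `x`, as a function -/
def blockF {k : ℕ} (x : ℕ → Fin k) (L j : ℕ) : Fin L → Fin k := fun i => x (L * j + i)

/-- the `j`-th block of length `L` of `x`, as a word -/
def blockW {k : ℕ} (x : ℕ → Fin k) (L j : ℕ) : List (Fin k) := List.ofFn (blockF x L j)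

variable {k : ℕ}

lemma blockW_length (x : ℕ → Fin k) (L j : ℕ) : (blockW x L j).length = L := by
  simp [blockW]

lemma occCount_card (w u : List (Fin k)) :
    occCount w u = ((Finset.range (w.length + 1 - u.length)).filter
      (fun i => (w.drop i).take u.length = u)).card := by
  rw [occCount, length_filter_range]

lemma alocc_card (w u : List (Fin k)) :
    alocc w u = ((Finset.range (w.length / u.length)).filter
      (fun i => (w.drop (i * u.length)).take u.length = u)).card := by
  rw [alocc, length_filter_range]

/-- alocc of prefix as count of blocks -/
lemma alocc_pref {x : ℕ → Fin k} {L n : ℕ} (hL : 0 < L) {v : List (Fin k)}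
    (hv : v.length = L) :
    alocc (pref x (L * n)) v
      = ((Finset.range n).filter (fun j => blockW x L j = v)).card := by
  rw [alocc_card, pref_length, hv, Nat.mul_div_cancel_left n hL]
  congr 1
  apply Finset.filter_congr
  intro i hi
  simp only [Finset.mem_range] at hi
  have hle : i * L + L ≤ L * n := by
    have : i + 1 ≤ n := hi
    calc i * L + L = (i+1) * L := by ring
      _ ≤ n * L := Nat.mul_le_mul_right L this
      _ = L * n := Nat.mul_comm n L
  rw [seg_pref x hle, blockW]
  constructor <;> intro h <;> rw [← h] <;> apply congrArg <;> funext j <;>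
    simp [blockF, Nat.mul_comm, Nat.add_comm]

lemma alocc_le_occCount (w u : List (Fin k)) (hu : 0 < u.length) :
    alocc w u ≤ occCount w u := by
  rw [alocc_card, occCount_card]
  apply Finset.card_le_card_of_injOn (fun i => i * u.length)
  · intro a ha
    simp only [Finset.mem_coe, Finset.mem_filter, Finset.mem_range] at ha ⊢
    refine ⟨?_, ha.2⟩
    have h1 : (a + 1) * u.length ≤ w.length := by
      have : a + 1 ≤ w.length / u.length := ha.1
      calc (a+1) * u.length ≤ w.length / u.length * u.length :=
            Nat.mul_le_mul_right _ this
        _ ≤ w.length := Nat.div_mul_le_self _ _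
    have : a * u.length + u.length ≤ w.length := by
      have := h1; nlinarith [ha.1]
    omega
  · intro a _ b _ h
    exact Nat.eq_of_mul_eq_mul_right hu h

lemma occCount_le (w u : List (Fin k)) (hu : 0 < u.length) :
    occCount w u ≤ w.length := by
  rw [occCount]
  calc ((List.range (w.length + 1 - u.length)).filter _).length
      ≤ (List.range (w.length + 1 - u.length)).length := List.length_filter_le _ _
    _ = w.length + 1 - u.length := List.length_range
    _ ≤ w.length := by omega

/-- count over range m*q splits into q groups of m -/
lemma card_filter_range_mul (m q : ℕ) (Q : ℕ → Prop) [DecidablePred Q] :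
    ((Finset.range (m * q)).filter Q).card
      = ∑ j ∈ Finset.range q, ((Finset.range m).filter (fun s => Q (m * j + s))).card := by
  induction q with
  | zero => simp
  | succ q ih =>
    rw [Nat.mul_succ, Finset.range_add, Finset.filter_union, Finset.sum_range_succ, ← ih]
    rw [Finset.card_union_of_disjoint]
    · congr 1
      rw [Finset.filter_map, Finset.card_map]
      rfl
    · apply Finset.disjoint_filter_filter
      rw [Finset.disjoint_left]
      intro a ha hb
      simp only [Finset.mem_range] at ha
      simp only [Finset.mem_map, Finset.mem_range, addLeftEmbedding_apply] at hb
      omega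

/-- range filter card to Fin filter card -/
lemma card_filter_range_fin (m : ℕ) (P : ℕ → Prop) [DecidablePred P] :
    ((Finset.range m).filter P).card
      = ((Finset.univ : Finset (Fin m)).filter (fun s : Fin m => P s.val)).card := by
  rw [Finset.card_filter, Finset.card_filter]
  exact (Fin.sum_univ_eq_sum_range (fun i => if P i then 1 else 0) m).symm

end HotSpotAux
namespace HotSpotAux
open Filter Topology Finset

variable {k : ℕ}

lemma count_blockF_eq_alocc (x : ℕ → Fin k) {L : ℕ} (hL : 0 < L) (f : Fin L → Fin k) (n : ℕ) :
    ((Finset.range n).filter (fun j => blockF x L j = f)).card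
      = alocc (pref x (L * n)) (List.ofFn f) := by
  rw [alocc_pref hL (by simp)]
  congr 1
  apply Finset.filter_congr
  intro j _
  simp [blockW, List.ofFn_inj]

/-- Lemma C: from normality, frequency of blocks satisfying a predicate -/
lemma block_freq {x : ℕ → Fin k}
    (hx : ∀ ℓ : ℕ, 0 < ℓ → ∀ v : List (Fin k), v.length = ℓ →
      Tendsto (fun n : ℕ => (alocc (pref x (ℓ * n)) v : ℝ) / (n : ℝ)) atTop
        (𝓝 (1 / (k : ℝ) ^ ℓ)))
    {L : ℕ} (hL : 0 < L) (P : (Fin L → Fin k) → Prop) [DecidablePred P] :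
    Tendsto (fun n : ℕ =>
        (((Finset.range n).filter (fun j => P (blockF x L j))).card : ℝ) / (n : ℝ))
      atTop (𝓝 ((((Finset.univ : Finset (Fin L → Fin k)).filter P).card : ℝ) / (k : ℝ) ^ L)) := by
  classical
  have key : ∀ n, ((Finset.range n).filter (fun j => P (blockF x L j))).card
      = ∑ f ∈ (Finset.univ : Finset (Fin L → Fin k)).filter P,
          alocc (pref x (L * n)) (List.ofFn f) := by
    intro n
    rw [Finset.card_eq_sum_card_fiberwise (f := fun j => blockF x L j)
        (t := (Finset.univ : Finset (Fin L → Fin k)).filter P)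
        (fun j hj => by simp only [Finset.mem_coe, Finset.mem_filter, Finset.mem_range] at hj ⊢; exact ⟨Finset.mem_univ _, hj.2⟩)]
    apply Finset.sum_congr rfl
    intro f hf
    simp only [Finset.mem_filter, Finset.mem_univ, true_and] at hf
    rw [← count_blockF_eq_alocc x hL f n]
    congr 1
    ext j
    simp only [Finset.mem_filter, Finset.mem_range]
    constructor
    · rintro ⟨⟨hj, _⟩, h2⟩; exact ⟨hj, h2⟩
    · rintro ⟨hj, h2⟩; exact ⟨⟨hj, h2 ▸ hf⟩, h2⟩
  have hsum : Tendsto (fun n : ℕ =>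
      ∑ f ∈ (Finset.univ : Finset (Fin L → Fin k)).filter P,
        (alocc (pref x (L * n)) (List.ofFn f) : ℝ) / (n : ℝ)) atTop
      (𝓝 (∑ _f ∈ (Finset.univ : Finset (Fin L → Fin k)).filter P, 1 / (k : ℝ) ^ L)) := by
    apply tendsto_finset_sum
    intro f _
    exact hx L hL (List.ofFn f) (by simp)
  have : (∑ _f ∈ (Finset.univ : Finset (Fin L → Fin k)).filter P, 1 / (k : ℝ) ^ L)
      = (((Finset.univ : Finset (Fin L → Fin k)).filter P).card : ℝ) / (k : ℝ) ^ L := by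
    rw [Finset.sum_const, nsmul_eq_mul]
    ring
  rw [← this]
  apply hsum.congr
  intro n
  rw [key n, ← Finset.sum_div]
  push_cast
  ring
end HotSpotAux
namespace HotSpotAux
open Filter Topology Finset

variable {k : ℕ}

lemma card_pattern {L r ℓ : ℕ} (h : r + ℓ ≤ L) (u : List (Fin k)) (hu : u.length = ℓ) :
    (((Finset.univ : Finset (Fin L → Fin k))).filter
      (fun f => ((List.ofFn f).drop r).take ℓ = u)).card = k ^ (L - ℓ) := by
  classical
  set S : Fin L → Finset (Fin k) := fun i =>
    if h2 : r ≤ i.val ∧ i.val < r + ℓ then ({u[i.val - r]'(by omega)} : Finset (Fin k))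
    else Finset.univ with hS
  have hset : ((Finset.univ : Finset (Fin L → Fin k))).filter
      (fun f => ((List.ofFn f).drop r).take ℓ = u) = Fintype.piFinset S := by
    ext f
    rw [Finset.mem_filter, Fintype.mem_piFinset]
    simp only [Finset.mem_univ, true_and]
    rw [seg_ofFn f h, ofFn_eq_iff hu]
    constructor
    · intro hj i
      by_cases h2 : r ≤ i.val ∧ i.val < r + ℓ
      · have h3 := hj ⟨i.val - r, by omega⟩
        have h4 : (⟨r + (i.val - r), by omega⟩ : Fin L) = i := Fin.ext (by simp; omega)
        rw [h4] at h3
        rw [hS]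
        simp only [dif_pos h2, Finset.mem_singleton]
        exact h3
      · rw [hS]; simp [dif_neg h2]
    · intro hSmem j
      have h3 := hSmem ⟨r + j.val, by omega⟩
      rw [hS] at h3
      simp only [dif_pos (show r ≤ r + j.val ∧ r + j.val < r + ℓ by omega),
        Finset.mem_singleton] at h3
      rw [h3]
      congr 1
      omega
  rw [hset, Fintype.card_piFinset]
  have hprod : ∀ i : Fin L, (S i).card = if r ≤ i.val ∧ i.val < r + ℓ then 1 else k := by
    intro i
    rw [hS]
    by_cases h2 : r ≤ i.val ∧ i.val < r + ℓ
    · simp [dif_pos h2, h2]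
    · simp [dif_neg h2, h2]
  rw [Finset.prod_congr rfl (fun i _ => hprod i), Finset.prod_ite, Finset.prod_const,
    Finset.prod_const, one_pow, one_mul]
  congr 1
  have hPcard : ((Finset.univ : Finset (Fin L)).filter
      (fun i => r ≤ i.val ∧ i.val < r + ℓ)).card = ℓ := by
    rw [← card_filter_range_fin L (fun v => r ≤ v ∧ v < r + ℓ)]
    have : (Finset.range L).filter (fun v => r ≤ v ∧ v < r + ℓ) = Finset.Ico r (r + ℓ) := by
      ext a
      simp only [Finset.mem_filter, Finset.mem_range, Finset.mem_Ico]
      omega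
    rw [this, Nat.card_Ico]
    omega
  have := Finset.card_filter_add_card_filter_not
    (s := (Finset.univ : Finset (Fin L))) (fun i : Fin L => r ≤ i.val ∧ i.val < r + ℓ)
  rw [hPcard] at this
  simp only [Finset.card_univ, Fintype.card_fin] at this
  omega
end HotSpotAux
namespace HotSpotAux
open Filter Topology Finset

variable {k : ℕ}

lemma occ_le_blocks (x : ℕ → Fin k) {ℓ L n : ℕ} (hl : 0 < ℓ) (hL : ℓ ≤ L)
    (u : List (Fin k)) (hu : u.length = ℓ) :
    occCount (pref x n) u ≤
      (∑ r ∈ Finset.range (L - ℓ + 1),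
        ((Finset.range (n / L + 1)).filter
          (fun j => ((List.ofFn (blockF x L j)).drop r).take ℓ = u)).card)
      + (n / L + 1) * ℓ := by
  classical
  have hL0 : 0 < L := lt_of_lt_of_le hl hL
  set q := n / L + 1 with hq
  have hq1 : 0 < q := by rw [hq]; exact Nat.succ_pos _
  set R := L - ℓ + 1 with hR
  have hlt : ∀ i : ℕ, i < n + 1 - ℓ → i / L < q := by
    intro i hi
    have h2 : i / L ≤ n / L := Nat.div_le_div_right (by omega)
    rw [hq]
    exact Nat.lt_succ_of_le h2
  have hdec : ∀ i : ℕ, i / L < q →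
      (i % L * q + i / L) % q = i / L ∧ (i % L * q + i / L) / q = i % L := by
    intro i h
    constructor
    · rw [Nat.mul_comm, Nat.add_comm, Nat.add_mul_mod_self_left, Nat.mod_eq_of_lt h]
    · rw [Nat.mul_comm, Nat.add_comm, Nat.add_mul_div_left _ _ (by omega : 0 < q),
        Nat.div_eq_of_lt h, Nat.zero_add]
  rw [occCount_card, pref_length, hu]
  set S := (Finset.range (n + 1 - ℓ)).filter
    (fun i => ((pref x n).drop i).take ℓ = u) with hSdef
  have hsplit := Finset.card_filter_add_card_filter_not
    (s := S) (fun i => i % L + ℓ ≤ L)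
  set Q : ℕ → Prop := fun c => ((List.ofFn (blockF x L (c % q))).drop (c / q)).take ℓ = u
    with hQ
  have hsum : (∑ r ∈ Finset.range R,
      ((Finset.range q).filter
        (fun j => ((List.ofFn (blockF x L j)).drop r).take ℓ = u)).card)
      = ((Finset.range (q * R)).filter Q).card := by
    rw [card_filter_range_mul q R Q]
    apply Finset.sum_congr rfl
    intro r _
    congr 1
    apply Finset.filter_congr
    intro s hs
    simp only [Finset.mem_range] at hs
    have h1 : (q * r + s) % q = s := by
      rw [Nat.add_comm, Nat.add_mul_mod_self_left, Nat.mod_eq_of_lt hs]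
    have h2 : (q * r + s) / q = r := by
      rw [Nat.add_comm, Nat.add_mul_div_left _ _ (by omega : 0 < q), Nat.div_eq_of_lt hs,
        Nat.zero_add]
    rw [hQ]
    simp only [h1, h2]
  have hint : (S.filter (fun i => i % L + ℓ ≤ L)).card
      ≤ ((Finset.range (q * R)).filter Q).card := by
    apply Finset.card_le_card_of_injOn (fun i => (i % L) * q + i / L)
    · intro i hi
      simp only [hSdef, Finset.mem_coe, Finset.mem_filter, Finset.mem_range] at hi
      obtain ⟨⟨hin, hseg⟩, hcond⟩ := hi
      have hiq : i / L < q := hlt i hin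
      obtain ⟨h1, h2⟩ := hdec i hiq
      simp only [Finset.mem_coe, Finset.mem_filter, Finset.mem_range]
      constructor
      · have h3 : i % L ≤ L - ℓ := by omega
        calc (i % L) * q + i / L < (i % L) * q + q := by omega
          _ = (i % L + 1) * q := by ring
          _ ≤ (L - ℓ + 1) * q := Nat.mul_le_mul_right q (by omega)
          _ = q * R := by rw [hR]; ring
      · rw [hQ]
        simp only [h1, h2]
        rw [seg_ofFn _ (by omega : i % L + ℓ ≤ L)]
        rw [seg_pref x (by omega : i + ℓ ≤ n)] at hseg
        refine Eq.trans ?_ hseg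
        apply congrArg
        funext s
        simp only [blockF]
        congr 1
        have := Nat.div_add_mod i L
        omega
    · intro a ha b hb hab
      simp only [hSdef, Finset.mem_coe, Finset.mem_filter, Finset.mem_range] at ha hb
      have haq : a / L < q := hlt a ha.1.1
      have hbq : b / L < q := hlt b hb.1.1
      obtain ⟨ha1, ha2⟩ := hdec a haq
      obtain ⟨hb1, hb2⟩ := hdec b hbq
      simp only at hab
      have e1 : a / L = b / L := by rw [← ha1, ← hb1, hab]
      have e2 : a % L = b % L := by rw [← ha2, ← hb2, hab]
      have ha3 := Nat.div_add_mod a L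
      have hb3 := Nat.div_add_mod b L
      have e3 : L * (a / L) = L * (b / L) := by rw [e1]
      omega
  have hcross : (S.filter (fun i => ¬ (i % L + ℓ ≤ L))).card ≤ q * ℓ := by
    calc (S.filter (fun i => ¬ (i % L + ℓ ≤ L))).card
        ≤ ((Finset.range q) ×ˢ (Finset.Ico (L - ℓ + 1) L)).card := by
          apply Finset.card_le_card_of_injOn (fun i => (i / L, i % L))
          · intro i hi
            simp only [hSdef, Finset.mem_coe, Finset.mem_filter, Finset.mem_range] at hi
            obtain ⟨⟨hin, _⟩, hcond⟩ := hi
            simp only [Finset.mem_coe, Finset.mem_product, Finset.mem_range, Finset.mem_Ico]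
            have hmod := Nat.mod_lt i hL0
            exact ⟨hlt i hin, by omega, hmod⟩
          · intro a ha b hb hab
            simp only [Prod.mk.injEq] at hab
            have ha2 := Nat.div_add_mod a L
            have hb2 := Nat.div_add_mod b L
            have e3 : L * (a / L) = L * (b / L) := by rw [hab.1]
            omega
      _ = q * (L - (L - ℓ + 1)) := by rw [Finset.card_product, Finset.card_range, Nat.card_Ico]
      _ ≤ q * ℓ := Nat.mul_le_mul_left q (by omega)
  calc S.card = (S.filter (fun i => i % L + ℓ ≤ L)).card
        + (S.filter (fun i => ¬ (i % L + ℓ ≤ L))).card := hsplit.symm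
    _ ≤ ((Finset.range (q * R)).filter Q).card + q * ℓ := Nat.add_le_add hint hcross
    _ = _ := by rw [← hsum]
end HotSpotAux
namespace HotSpotAux
open Filter Topology Finset

variable {k : ℕ}

set_option maxHeartbeats 2000000 in
lemma direction1 (hk : 0 < k) {x : ℕ → Fin k}
    (hx : ∀ ℓ : ℕ, 0 < ℓ → ∀ v : List (Fin k), v.length = ℓ →
      Tendsto (fun n : ℕ => (alocc (pref x (ℓ * n)) v : ℝ) / (n : ℝ)) atTop
        (𝓝 (1 / (k : ℝ) ^ ℓ)))
    {ℓ : ℕ} (hl : 0 < ℓ) (u : List (Fin k)) (hu : u.length = ℓ) :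
    Filter.limsup (fun n : ℕ => (occCount (pref x n) u : ℝ) / (n : ℝ)) atTop
      < 7 / (k : ℝ) ^ ℓ := by
  classical
  have hk1 : (1 : ℝ) ≤ (k : ℝ) := by exact_mod_cast hk
  set K : ℝ := (k : ℝ) ^ ℓ with hKdef
  have hK : 0 < K := by positivity
  have hK1 : 1 ≤ K := one_le_pow₀ hk1
  set L := ℓ * k ^ ℓ with hLdef
  have hkl : 0 < k ^ ℓ := Nat.pow_pos hk
  have hLl : ℓ ≤ L := Nat.le_mul_of_pos_right ℓ hkl
  have hL0 : 0 < L := lt_of_lt_of_le hl hLl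
  have hLK : (L : ℝ) = (ℓ : ℝ) * K := by rw [hLdef]; push_cast; rfl
  -- the per-offset counts tend to the right limit
  set R := L - ℓ + 1 with hR
  set cnt : ℕ → ℕ → ℕ := fun r q => ((Finset.range q).filter
      (fun j => ((List.ofFn (blockF x L j)).drop r).take ℓ = u)).card with hcnt
  have htend : Tendsto (fun q : ℕ => (∑ r ∈ Finset.range R, (cnt r q : ℝ)) / (q : ℝ)) atTop
      (𝓝 ((R : ℝ) * (((k ^ (L - ℓ) : ℕ) : ℝ) / (k : ℝ) ^ L))) := by
    have h1 : ∀ r ∈ Finset.range R, Tendsto (fun q : ℕ => (cnt r q : ℝ) / (q : ℝ)) atTop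
        (𝓝 (((k ^ (L - ℓ) : ℕ) : ℝ) / (k : ℝ) ^ L)) := by
      intro r hr
      simp only [Finset.mem_range] at hr
      have hrl : r + ℓ ≤ L := by omega
      have := block_freq hx hL0 (fun f => ((List.ofFn f).drop r).take ℓ = u)
      rw [card_pattern hrl u hu] at this
      exact this
    have := tendsto_finset_sum (Finset.range R) h1
    simp only [Finset.sum_const, Finset.card_range, nsmul_eq_mul] at this
    apply this.congr
    intro q
    rw [Finset.sum_div]
  have hα : (R : ℝ) * (((k ^ (L - ℓ) : ℕ) : ℝ) / (k : ℝ) ^ L) ≤ (L : ℝ) / K := by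
    rw [← mul_div_assoc]
    have hpow : ((k ^ (L - ℓ) : ℕ) : ℝ) * K = (k : ℝ) ^ L := by
      push_cast
      rw [← pow_add]
      congr 1
      omega
    rw [div_le_div_iff₀ (by positivity) hK, ← hpow]
    have hRL : (R : ℝ) ≤ (L : ℝ) := by
      have : R ≤ L := by omega
      exact_mod_cast this
    have hp0 : (0 : ℝ) < ((k ^ (L - ℓ) : ℕ) : ℝ) := by positivity
    calc (R : ℝ) * ((k ^ (L - ℓ) : ℕ) : ℝ) * K ≤ (L : ℝ) * ((k ^ (L - ℓ) : ℕ) : ℝ) * K := by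
          apply mul_le_mul_of_nonneg_right (mul_le_mul_of_nonneg_right hRL (le_of_lt hp0)) (le_of_lt hK)
      _ = (L : ℝ) * (((k ^ (L - ℓ) : ℕ) : ℝ) * K) := by ring
  set α : ℝ := (R : ℝ) * (((k ^ (L - ℓ) : ℕ) : ℝ) / (k : ℝ) ^ L) with hαdef
  have hα0 : 0 ≤ α := by positivity
  -- eventual bound on the sums
  have hEq : ∀ᶠ q : ℕ in atTop, (∑ r ∈ Finset.range R, (cnt r q : ℝ)) < (α + 1) * q := by
    have h2 := htend.eventually_lt_const (lt_add_one α)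
    filter_upwards [h2, eventually_ge_atTop 1] with q hq hq1
    have hq0 : (0 : ℝ) < q := by exact_mod_cast hq1
    rw [div_lt_iff₀ hq0] at hq
    exact hq
  have hqt : Tendsto (fun n : ℕ => n / L + 1) atTop atTop := by
    rw [tendsto_atTop_atTop]
    intro b
    exact ⟨b * L, fun n hn => le_trans ((Nat.le_div_iff_mul_le hL0).2 hn) (Nat.le_succ _)⟩
  have hEn := hqt.eventually hEq
  -- main eventual bound
  have hmain : ∀ᶠ n : ℕ in atTop,
      (occCount (pref x n) u : ℝ) / (n : ℝ) ≤ 6 / K := by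
    filter_upwards [hEn, eventually_ge_atTop L, eventually_ge_atTop 1] with n hEn hnL hn1
    have hn0 : (0 : ℝ) < n := by exact_mod_cast hn1
    set q := n / L + 1 with hqdef
    have hq0 : (0 : ℝ) < q := by positivity
    have hocc : (occCount (pref x n) u : ℝ) ≤ (∑ r ∈ Finset.range R, (cnt r q : ℝ)) + q * ℓ := by
      have := occ_le_blocks x hl hLl u hu (n := n)
      have hcast : ((∑ r ∈ Finset.range R, cnt r q : ℕ) : ℝ) + (q : ℝ) * ℓ
          = ((∑ r ∈ Finset.range R, cnt r q + q * ℓ : ℕ) : ℝ) := by push_cast; ring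
      calc (occCount (pref x n) u : ℝ) ≤ ((∑ r ∈ Finset.range R, cnt r q + q * ℓ : ℕ) : ℝ) := by
            exact_mod_cast this
        _ = (∑ r ∈ Finset.range R, (cnt r q : ℝ)) + q * ℓ := by push_cast; ring
    have hqn : (q : ℝ) * L ≤ 2 * n := by
      have h1 : (n / L) * L ≤ n := Nat.div_mul_le_self n L
      have h2 : q * L = (n / L) * L + L := by rw [hqdef]; ring
      have h3 : q * L ≤ n + L := by omega
      have h4 : (q * L : ℕ) ≤ 2 * n := by omega
      exact_mod_cast h4
    have hfinal : (occCount (pref x n) u : ℝ) ≤ (α + 1 + ℓ) * q := by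
      calc (occCount (pref x n) u : ℝ) ≤ (∑ r ∈ Finset.range R, (cnt r q : ℝ)) + q * ℓ := hocc
        _ ≤ (α + 1) * q + q * ℓ := by linarith [hEn]
        _ = (α + 1 + ℓ) * q := by ring
    rw [div_le_div_iff₀ hn0 hK]
    have hl1 : (1 : ℝ) ≤ (ℓ : ℝ) := by exact_mod_cast hl
    have hq2L : (q : ℝ) * K ≤ 2 * n / ℓ * K := by
      rw [hLK] at hqn
      rw [div_mul_eq_mul_div, le_div_iff₀ (by linarith : (0:ℝ) < (ℓ:ℝ))]
      nlinarith
    -- occ * K ≤ (α+1+ℓ) * q * K ≤ (L/K + 1 + ℓ) * q * K ≤ 6 * n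
    have hαK : (α + 1 + ℓ) ≤ (L : ℝ) / K + 1 + ℓ := by linarith [hα]
    have hstep : (occCount (pref x n) u : ℝ) * K ≤ ((L : ℝ) / K + 1 + ℓ) * ((q : ℝ) * K) := by
      calc (occCount (pref x n) u : ℝ) * K ≤ ((α + 1 + ℓ) * q) * K :=
            mul_le_mul_of_nonneg_right hfinal (le_of_lt hK)
        _ = (α + 1 + ℓ) * ((q : ℝ) * K) := by ring
        _ ≤ ((L : ℝ) / K + 1 + ℓ) * ((q : ℝ) * K) := by
            apply mul_le_mul_of_nonneg_right hαK
            positivity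
    have hLKK : (L : ℝ) / K = (ℓ : ℝ) := by rw [hLK]; field_simp
    rw [hLKK] at hstep
    have h2l : (1 : ℝ) + 2 * ℓ ≤ 3 * ℓ := by linarith
    -- (ℓ + 1 + ℓ) * (q * K) ≤ (3ℓ) * (q*K) and q*K ≤ 2n/ℓ*K ... combine
    have hqK0 : (0 : ℝ) ≤ (q : ℝ) * K := by positivity
    have hstep2 : (occCount (pref x n) u : ℝ) * K ≤ 3 * (ℓ : ℝ) * ((q : ℝ) * K) := by
      calc (occCount (pref x n) u : ℝ) * K ≤ ((ℓ : ℝ) + 1 + ℓ) * ((q : ℝ) * K) := hstep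
        _ ≤ 3 * (ℓ : ℝ) * ((q : ℝ) * K) := by nlinarith
    have hstep3 : 3 * (ℓ : ℝ) * ((q : ℝ) * K) ≤ 6 * n := by
      have hqK : (q : ℝ) * K ≤ 2 * n / ℓ := by
        rw [hLK] at hqn
        rw [le_div_iff₀ (by linarith : (0:ℝ) < (ℓ:ℝ))]
        nlinarith
      calc 3 * (ℓ : ℝ) * ((q : ℝ) * K) ≤ 3 * (ℓ : ℝ) * (2 * n / ℓ) := by
            apply mul_le_mul_of_nonneg_left hqK (by linarith)
        _ = 6 * n := by field_simp; ring
    linarith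
  -- conclude about the limsup
  have hls : Filter.limsup (fun n : ℕ => (occCount (pref x n) u : ℝ) / (n : ℝ)) atTop ≤ 6 / K := by
    apply Filter.limsup_le_of_le _ hmain
    apply Filter.IsBoundedUnder.isCoboundedUnder_le
    apply Filter.isBoundedUnder_of
    refine ⟨0, fun n => ?_⟩
    positivity
  calc Filter.limsup (fun n : ℕ => (occCount (pref x n) u : ℝ) / (n : ℝ)) atTop
      ≤ 6 / K := hls
    _ < 7 / K := by gcongr <;> norm_num
end HotSpotAux
namespace HotSpotAux
open Filter Topology Finset

lemma isolate {s1 s2 s3 s4 : ℕ}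
    (hE : ¬((s1=s2∧s3=s4)∨(s1=s3∧s2=s4)∨(s1=s4∧s2=s3))) :
    (s2≠s1∧s3≠s1∧s4≠s1) ∨ (s1≠s2∧s3≠s2∧s4≠s2) ∨ (s1≠s3∧s2≠s3∧s4≠s3) ∨ (s1≠s4∧s2≠s4∧s3≠s4) := by
  omega

/-- summing a function of one coordinate times a function not depending on it -/
lemma sum_coord_mul {V : Type*} [Fintype V] [DecidableEq V] [Nonempty V] {m : ℕ}
    (Y : V → ℝ) (hY : ∑ v : V, Y v = 0) (a : Fin m) (h : (Fin m → V) → ℝ)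
    (hh : ∀ ω ω' : Fin m → V, (∀ b, b ≠ a → ω b = ω' b) → h ω = h ω') :
    ∑ ω : Fin m → V, Y (ω a) * h ω = 0 := by
  classical
  set e := Equiv.piSplitAt a (fun _ : Fin m => V) with he
  rw [← Equiv.sum_comp e.symm (fun ω => Y (ω a) * h ω), Fintype.sum_prod_type]
  set v0 : V := Classical.arbitrary V with hv0
  have key : ∀ (v : V) (g : {j : Fin m // j ≠ a} → V),
      Y ((e.symm (v, g)) a) * h (e.symm (v, g)) = Y v * h (e.symm (v0, g)) := by
    intro v g
    have h1 : (e.symm (v, g)) a = v := by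
      rw [he, Equiv.piSplitAt_symm_apply]
      simp
    have h2 : h (e.symm (v, g)) = h (e.symm (v0, g)) := by
      apply hh
      intro b hb
      rw [he, Equiv.piSplitAt_symm_apply, Equiv.piSplitAt_symm_apply]
      simp [dif_neg hb]
    rw [h1, h2]
  calc (∑ v : V, ∑ g : {j : Fin m // j ≠ a} → V, Y ((e.symm (v, g)) a) * h (e.symm (v, g)))
      = ∑ v : V, ∑ g : {j : Fin m // j ≠ a} → V, Y v * h (e.symm (v0, g)) := by
        apply Finset.sum_congr rfl; intro v _; apply Finset.sum_congr rfl; intro g _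
        exact key v g
    _ = ∑ v : V, Y v * ∑ g : {j : Fin m // j ≠ a} → V, h (e.symm (v0, g)) := by
        apply Finset.sum_congr rfl; intro v _; rw [Finset.mul_sum]
    _ = (∑ v : V, Y v) * ∑ g : {j : Fin m // j ≠ a} → V, h (e.symm (v0, g)) := by
        rw [Finset.sum_mul]
    _ = 0 := by rw [hY, zero_mul]

lemma sum_four_zero {V : Type*} [Fintype V] [DecidableEq V] [Nonempty V] {m : ℕ}
    (Y : V → ℝ) (hY : ∑ v : V, Y v = 0) (b1 b2 b3 a : Fin m)
    (h1 : b1 ≠ a) (h2 : b2 ≠ a) (h3 : b3 ≠ a) :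
    ∑ ω : Fin m → V, Y (ω b1) * Y (ω b2) * Y (ω b3) * Y (ω a) = 0 := by
  have key := sum_coord_mul Y hY a (fun ω => Y (ω b1) * Y (ω b2) * Y (ω b3))
    (by intro ω ω' hb; show Y (ω b1) * Y (ω b2) * Y (ω b3) = Y (ω' b1) * Y (ω' b2) * Y (ω' b3); rw [hb b1 h1, hb b2 h2, hb b3 h3])
  rw [← key]
  apply Finset.sum_congr rfl
  intro ω _
  ring

/-- fourth moment bound -/
lemma fourth_moment {V : Type*} [Fintype V] [DecidableEq V] [Nonempty V] {m : ℕ}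
    (Y : V → ℝ) (hY : ∑ v : V, Y v = 0) (hY1 : ∀ v, |Y v| ≤ 1) :
    ∑ ω : Fin m → V, (∑ s : Fin m, Y (ω s)) ^ 4
      ≤ 3 * (m : ℝ) ^ 2 * (Fintype.card (Fin m → V) : ℝ) := by
  classical
  set T : (Fin 4 → Fin m) → ℝ := fun σ => ∑ ω : Fin m → V,
    Y (ω (σ 0)) * Y (ω (σ 1)) * Y (ω (σ 2)) * Y (ω (σ 3)) with hT
  have hswap : ∑ ω : Fin m → V, (∑ s : Fin m, Y (ω s)) ^ 4
      = ∑ σ : Fin 4 → Fin m, T σ := by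
    have hexp : ∀ ω : Fin m → V, (∑ s : Fin m, Y (ω s)) ^ 4
        = ∑ σ : Fin 4 → Fin m, Y (ω (σ 0)) * Y (ω (σ 1)) * Y (ω (σ 2)) * Y (ω (σ 3)) := by
      intro ω
      have h1 : (∑ s : Fin m, Y (ω s)) ^ 4 = ∏ _i : Fin 4, (∑ s : Fin m, Y (ω s)) := by
        rw [Finset.prod_const, Finset.card_univ, Fintype.card_fin]
      rw [h1, Finset.prod_univ_sum]
      have h2 : Fintype.piFinset (fun _ : Fin 4 => (Finset.univ : Finset (Fin m)))
          = (Finset.univ : Finset (Fin 4 → Fin m)) := by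
        ext σ; simp
      rw [h2]
      apply Finset.sum_congr rfl
      intro σ _
      rw [Fin.prod_univ_four]
    rw [Finset.sum_congr rfl (fun ω _ => hexp ω), Finset.sum_comm]
  have hTbound : ∀ σ : Fin 4 → Fin m, |T σ| ≤ (Fintype.card (Fin m → V) : ℝ) := by
    intro σ
    rw [hT]
    calc |∑ ω : Fin m → V, Y (ω (σ 0)) * Y (ω (σ 1)) * Y (ω (σ 2)) * Y (ω (σ 3))|
        ≤ ∑ ω : Fin m → V, |Y (ω (σ 0)) * Y (ω (σ 1)) * Y (ω (σ 2)) * Y (ω (σ 3))| :=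
          Finset.abs_sum_le_sum_abs _ _
      _ ≤ ∑ _ω : Fin m → V, 1 := by
          apply Finset.sum_le_sum
          intro ω _
          rw [abs_mul, abs_mul, abs_mul]
          have a0 := abs_nonneg (Y (ω (σ 0)))
          have a1 := abs_nonneg (Y (ω (σ 1)))
          have a2 := abs_nonneg (Y (ω (σ 2)))
          have a3 := abs_nonneg (Y (ω (σ 3)))
          have b0 := hY1 (ω (σ 0)); have b1 := hY1 (ω (σ 1))
          have b2 := hY1 (ω (σ 2)); have b3 := hY1 (ω (σ 3))
          have c01 : |Y (ω (σ 0))| * |Y (ω (σ 1))| ≤ 1 := mul_le_one₀ b0 a1 b1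
          have c012 : |Y (ω (σ 0))| * |Y (ω (σ 1))| * |Y (ω (σ 2))| ≤ 1 :=
            mul_le_one₀ c01 a2 b2
          exact mul_le_one₀ c012 a3 b3
      _ = (Fintype.card (Fin m → V) : ℝ) := by
          rw [Finset.sum_const, Finset.card_univ, nsmul_eq_mul, mul_one]
  set E : Finset (Fin 4 → Fin m) := Finset.univ.filter
    (fun σ => (σ 0 = σ 1 ∧ σ 2 = σ 3) ∨ (σ 0 = σ 2 ∧ σ 1 = σ 3) ∨ (σ 0 = σ 3 ∧ σ 1 = σ 2))
    with hE
  have hvanish : ∀ σ ∈ Finset.univ.filter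
      (fun σ : Fin 4 → Fin m => ¬((σ 0 = σ 1 ∧ σ 2 = σ 3) ∨ (σ 0 = σ 2 ∧ σ 1 = σ 3)
        ∨ (σ 0 = σ 3 ∧ σ 1 = σ 2))), T σ = 0 := by
    intro σ hσ
    rw [Finset.mem_filter] at hσ
    have hσ' := hσ.2
    have hiso := isolate (s1 := (σ 0).val) (s2 := (σ 1).val) (s3 := (σ 2).val)
      (s4 := (σ 3).val) (by
        intro hcon
        apply hσ'
        rcases hcon with ⟨a, b⟩ | ⟨a, b⟩ | ⟨a, b⟩
        · exact Or.inl ⟨Fin.ext a, Fin.ext b⟩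
        · exact Or.inr (Or.inl ⟨Fin.ext a, Fin.ext b⟩)
        · exact Or.inr (Or.inr ⟨Fin.ext a, Fin.ext b⟩))
    have hne : ∀ {i j : Fin 4}, (σ i).val ≠ (σ j).val → σ i ≠ σ j := by
      intro i j h hc; exact h (by rw [hc])
    rw [hT]
    rcases hiso with ⟨a1, a2, a3⟩ | ⟨a1, a2, a3⟩ | ⟨a1, a2, a3⟩ | ⟨a1, a2, a3⟩
    · rw [← sum_four_zero Y hY (σ 1) (σ 2) (σ 3) (σ 0) (hne a1) (hne a2) (hne a3)]
      apply Finset.sum_congr rfl; intro ω _; ring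
    · rw [← sum_four_zero Y hY (σ 0) (σ 2) (σ 3) (σ 1) (hne a1) (hne a2) (hne a3)]
      apply Finset.sum_congr rfl; intro ω _; ring
    · rw [← sum_four_zero Y hY (σ 0) (σ 1) (σ 3) (σ 2) (hne a1) (hne a2) (hne a3)]
      apply Finset.sum_congr rfl; intro ω _; ring
    · rw [← sum_four_zero Y hY (σ 0) (σ 1) (σ 2) (σ 3) (hne a1) (hne a2) (hne a3)]
  have hEcard : (E.card : ℝ) ≤ 3 * (m : ℝ) ^ 2 := by
    have h1 : ∀ (f : (Fin 4 → Fin m) → Fin m × Fin m)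
        (P : (Fin 4 → Fin m) → Prop) (_ : DecidablePred P),
        (∀ σ σ' : Fin 4 → Fin m, P σ → P σ' → f σ = f σ' → σ = σ') →
        ((Finset.univ.filter P).card : ℝ) ≤ (m : ℝ) ^ 2 := by
      intro f P hdec hinj
      have := Finset.card_le_card_of_injOn f
        (s := Finset.univ.filter P) (t := Finset.univ)
        (fun a _ => Finset.mem_univ _)
        (by intro a ha b hb hab
            rw [Finset.mem_coe, Finset.mem_filter] at ha hb
            exact hinj a b ha.2 hb.2 hab)
      have h2 : (Finset.univ : Finset (Fin m × Fin m)).card = m ^ 2 := by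
        rw [Finset.card_univ, Fintype.card_prod, Fintype.card_fin]
        ring
      rw [h2] at this
      exact_mod_cast this
    have hsub : E ⊆ (Finset.univ.filter (fun σ : Fin 4 → Fin m => σ 0 = σ 1 ∧ σ 2 = σ 3))
        ∪ ((Finset.univ.filter (fun σ : Fin 4 → Fin m => σ 0 = σ 2 ∧ σ 1 = σ 3))
          ∪ (Finset.univ.filter (fun σ : Fin 4 → Fin m => σ 0 = σ 3 ∧ σ 1 = σ 2))) := by
      intro σ hσ
      rw [hE, Finset.mem_filter] at hσ
      rcases hσ.2 with h | h | h
      · exact Finset.mem_union_left _ (Finset.mem_filter.2 ⟨Finset.mem_univ _, h⟩)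
      · exact Finset.mem_union_right _ (Finset.mem_union_left _
          (Finset.mem_filter.2 ⟨Finset.mem_univ _, h⟩))
      · exact Finset.mem_union_right _ (Finset.mem_union_right _
          (Finset.mem_filter.2 ⟨Finset.mem_univ _, h⟩))
    have hinj1 : ∀ σ σ' : Fin 4 → Fin m, (σ 0 = σ 1 ∧ σ 2 = σ 3) → (σ' 0 = σ' 1 ∧ σ' 2 = σ' 3)
        → (σ 0, σ 2) = (σ' 0, σ' 2) → σ = σ' := by
      intro σ σ' h h' he2
      rw [Prod.ext_iff] at he2
      funext i
      have hi : i = 0 ∨ i = 1 ∨ i = 2 ∨ i = 3 := by omega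
      rcases hi with rfl | rfl | rfl | rfl
      · exact he2.1
      · rw [← h.1, ← h'.1]; exact he2.1
      · exact he2.2
      · rw [← h.2, ← h'.2]; exact he2.2
    have hinj2 : ∀ σ σ' : Fin 4 → Fin m, (σ 0 = σ 2 ∧ σ 1 = σ 3) → (σ' 0 = σ' 2 ∧ σ' 1 = σ' 3)
        → (σ 0, σ 1) = (σ' 0, σ' 1) → σ = σ' := by
      intro σ σ' h h' he2
      rw [Prod.ext_iff] at he2
      funext i
      have hi : i = 0 ∨ i = 1 ∨ i = 2 ∨ i = 3 := by omega
      rcases hi with rfl | rfl | rfl | rfl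
      · exact he2.1
      · exact he2.2
      · rw [← h.1, ← h'.1]; exact he2.1
      · rw [← h.2, ← h'.2]; exact he2.2
    have hinj3 : ∀ σ σ' : Fin 4 → Fin m, (σ 0 = σ 3 ∧ σ 1 = σ 2) → (σ' 0 = σ' 3 ∧ σ' 1 = σ' 2)
        → (σ 0, σ 1) = (σ' 0, σ' 1) → σ = σ' := by
      intro σ σ' h h' he2
      rw [Prod.ext_iff] at he2
      funext i
      have hi : i = 0 ∨ i = 1 ∨ i = 2 ∨ i = 3 := by omega
      rcases hi with rfl | rfl | rfl | rfl
      · exact he2.1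
      · exact he2.2
      · rw [← h.2, ← h'.2]; exact he2.2
      · rw [← h.1, ← h'.1]; exact he2.1
    have c1 := h1 (fun σ => (σ 0, σ 2)) _ (by infer_instance) hinj1
    have c2 := h1 (fun σ => (σ 0, σ 1)) _ (by infer_instance) hinj2
    have c3 := h1 (fun σ => (σ 0, σ 1)) _ (by infer_instance) hinj3
    have hle := Finset.card_le_card hsub
    have hu2 := Finset.card_union_le
      (Finset.univ.filter (fun σ : Fin 4 → Fin m => σ 0 = σ 2 ∧ σ 1 = σ 3))
      (Finset.univ.filter (fun σ : Fin 4 → Fin m => σ 0 = σ 3 ∧ σ 1 = σ 2))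
    have hu1 := Finset.card_union_le
      (Finset.univ.filter (fun σ : Fin 4 → Fin m => σ 0 = σ 1 ∧ σ 2 = σ 3))
      ((Finset.univ.filter (fun σ : Fin 4 → Fin m => σ 0 = σ 2 ∧ σ 1 = σ 3))
        ∪ (Finset.univ.filter (fun σ : Fin 4 → Fin m => σ 0 = σ 3 ∧ σ 1 = σ 2)))
    have h5 : (E.card : ℝ) ≤ ((Finset.univ.filter (fun σ : Fin 4 → Fin m => σ 0 = σ 1 ∧ σ 2 = σ 3)).card : ℝ)
        + (((Finset.univ.filter (fun σ : Fin 4 → Fin m => σ 0 = σ 2 ∧ σ 1 = σ 3)).card : ℝ)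
        + ((Finset.univ.filter (fun σ : Fin 4 → Fin m => σ 0 = σ 3 ∧ σ 1 = σ 2)).card : ℝ)) := by
      have h3 : E.card ≤ _ := le_trans hle hu1
      have h4 := le_trans h3 (Nat.add_le_add_left hu2 _)
      exact_mod_cast h4
    linarith
  -- put everything together
  rw [hswap, ← Finset.sum_filter_add_sum_filter_not Finset.univ
    (fun σ : Fin 4 → Fin m => (σ 0 = σ 1 ∧ σ 2 = σ 3) ∨ (σ 0 = σ 2 ∧ σ 1 = σ 3)
      ∨ (σ 0 = σ 3 ∧ σ 1 = σ 2)) T]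
  rw [Finset.sum_congr rfl hvanish]
  rw [Finset.sum_const, nsmul_eq_mul, mul_zero, add_zero]
  calc ∑ σ ∈ E, T σ ≤ ∑ σ ∈ E, |T σ| := Finset.sum_le_sum (fun σ _ => le_abs_self _)
    _ ≤ ∑ _σ ∈ E, (Fintype.card (Fin m → V) : ℝ) := Finset.sum_le_sum (fun σ _ => hTbound σ)
    _ = (E.card : ℝ) * (Fintype.card (Fin m → V) : ℝ) := by
        rw [Finset.sum_const, nsmul_eq_mul]
    _ ≤ 3 * (m : ℝ) ^ 2 * (Fintype.card (Fin m → V) : ℝ) := by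
        apply mul_le_mul_of_nonneg_right hEcard (by positivity)
end HotSpotAux
namespace HotSpotAux
open Filter Topology Finset

variable {k : ℕ}

/-- number of aligned occurrences of `u` among the `m` sub-blocks of `ω` -/
def Sct {k t m : ℕ} (u : List (Fin k)) (ω : Fin m → Fin t → Fin k) : ℕ :=
  ((Finset.univ : Finset (Fin m)).filter (fun s => List.ofFn (ω s) = u)).card

lemma card_eq_u {t : ℕ} (u : List (Fin k)) (hu : u.length = t) :
    ((Finset.univ : Finset (Fin t → Fin k)).filter (fun v => List.ofFn v = u)).card = 1 := by
  classical
  set v0 : Fin t → Fin k := fun i => u[(i : ℕ)]'(by omega) with hv0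
  have : (Finset.univ : Finset (Fin t → Fin k)).filter (fun v => List.ofFn v = u) = {v0} := by
    ext v
    simp only [Finset.mem_filter, Finset.mem_univ, true_and, Finset.mem_singleton]
    rw [ofFn_eq_iff hu]
    constructor
    · intro h; funext i; exact h i
    · intro h i; rw [h]
  rw [this, Finset.card_singleton]

lemma sct_sub (m t : ℕ) (u : List (Fin k)) (p : ℝ) (ω : Fin m → Fin t → Fin k) :
    (Sct u ω : ℝ) - (m : ℝ) * p
      = ∑ s : Fin m, ((if List.ofFn (ω s) = u then (1:ℝ) else 0) - p) := by
  classical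
  rw [Finset.sum_sub_distrib, Finset.sum_boole, Finset.sum_const, Finset.card_univ,
    Fintype.card_fin, nsmul_eq_mul, Sct]

lemma sct_moment {t m : ℕ} (hk : 0 < k) (u : List (Fin k)) (hu : u.length = t) :
    ∑ ω : Fin m → Fin t → Fin k,
        ((Sct u ω : ℝ) - (m : ℝ) * (1 / (k : ℝ) ^ t)) ^ 4
      ≤ 3 * (m : ℝ) ^ 2 * (k : ℝ) ^ (t * m) := by
  classical
  have hk1 : (1 : ℝ) ≤ (k : ℝ) := by exact_mod_cast hk
  set p : ℝ := 1 / (k : ℝ) ^ t with hp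
  have hp0 : 0 < p := by positivity
  have hp1 : p ≤ 1 := by
    rw [hp]
    apply div_le_one_of_le₀ (one_le_pow₀ hk1) (by positivity)
  set Y : (Fin t → Fin k) → ℝ := fun v => (if List.ofFn v = u then (1:ℝ) else 0) - p with hY
  have hV : Nonempty (Fin t → Fin k) := ⟨fun _ => ⟨0, hk⟩⟩
  have hYsum : ∑ v : Fin t → Fin k, Y v = 0 := by
    rw [hY]
    simp only [Finset.sum_sub_distrib]
    rw [Finset.sum_boole, card_eq_u u hu, Finset.sum_const, Finset.card_univ, Fintype.card_fun,
      Fintype.card_fin, Fintype.card_fin, nsmul_eq_mul, hp]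
    field_simp
    simp
  have hY1 : ∀ v, |Y v| ≤ 1 := by
    intro v
    rw [hY, abs_le]
    constructor <;> by_cases h : List.ofFn v = u <;> simp [h] <;> linarith
  have key := fourth_moment (m := m) Y hYsum hY1
  have hcard : (Fintype.card (Fin m → Fin t → Fin k) : ℝ) = (k : ℝ) ^ (t * m) := by
    rw [Fintype.card_fun, Fintype.card_fun, Fintype.card_fin, Fintype.card_fin,
      Fintype.card_fin, ← pow_mul]
    push_cast
    ring
  rw [hcard] at key
  calc ∑ ω : Fin m → Fin t → Fin k, ((Sct u ω : ℝ) - (m : ℝ) * p) ^ 4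
      = ∑ ω : Fin m → Fin t → Fin k, (∑ s : Fin m, Y (ω s)) ^ 4 := by
        apply Finset.sum_congr rfl
        intro ω _
        rw [sct_sub m t u p ω]
    _ ≤ 3 * (m : ℝ) ^ 2 * (k : ℝ) ^ (t * m) := key

/-- cardinality of the bad set -/
lemma bad_card {t m : ℕ} (hk : 0 < k) (u : List (Fin k)) (hu : u.length = t)
    {ε : ℝ} (hε : 0 < ε) (hm : 0 < m) :
    ((((Finset.univ : Finset (Fin m → Fin t → Fin k))).filter
        (fun ω => ε * m < |(Sct u ω : ℝ) - (m : ℝ) * (1 / (k : ℝ) ^ t)|)).card : ℝ)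
      ≤ 3 * (k : ℝ) ^ (t * m) / (ε ^ 4 * (m : ℝ) ^ 2) := by
  classical
  set p : ℝ := 1 / (k : ℝ) ^ t with hp
  set B := (((Finset.univ : Finset (Fin m → Fin t → Fin k))).filter
      (fun ω => ε * m < |(Sct u ω : ℝ) - (m : ℝ) * p|)) with hB
  have hm0 : (0 : ℝ) < m := by exact_mod_cast hm
  have hkey : (B.card : ℝ) * (ε * m) ^ 4 ≤ 3 * (m : ℝ) ^ 2 * (k : ℝ) ^ (t * m) := by
    calc (B.card : ℝ) * (ε * m) ^ 4 = ∑ _ω ∈ B, (ε * m) ^ 4 := by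
          rw [Finset.sum_const, nsmul_eq_mul]
      _ ≤ ∑ ω ∈ B, ((Sct u ω : ℝ) - (m : ℝ) * p) ^ 4 := by
          apply Finset.sum_le_sum
          intro ω hω
          rw [hB, Finset.mem_filter] at hω
          have h1 : (0:ℝ) ≤ ε * m := by positivity
          calc (ε * m) ^ 4 ≤ |(Sct u ω : ℝ) - (m : ℝ) * p| ^ 4 := by
                apply pow_le_pow_left₀ h1 (le_of_lt hω.2)
            _ = ((Sct u ω : ℝ) - (m : ℝ) * p) ^ 4 := by
                rw [← abs_pow, abs_of_nonneg (by positivity)]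
      _ ≤ ∑ ω : Fin m → Fin t → Fin k, ((Sct u ω : ℝ) - (m : ℝ) * p) ^ 4 := by
          apply Finset.sum_le_sum_of_subset_of_nonneg (Finset.filter_subset _ _)
          intro ω _ _
          positivity
      _ ≤ 3 * (m : ℝ) ^ 2 * (k : ℝ) ^ (t * m) := sct_moment hk u hu
  have hpos : (0:ℝ) < (ε * m) ^ 4 := by positivity
  rw [← le_div_iff₀ hpos] at hkey
  calc (B.card : ℝ) ≤ 3 * (m : ℝ) ^ 2 * (k : ℝ) ^ (t * m) / (ε * m) ^ 4 := hkey
    _ = 3 * (k : ℝ) ^ (t * m) / (ε ^ 4 * (m : ℝ) ^ 2) := by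
        field_simp
end HotSpotAux
namespace HotSpotAux
open Filter Topology Finset

variable {k : ℕ}

lemma occ_div_le_one (x : ℕ → Fin k) (w : List (Fin k)) (hw : 0 < w.length) (N : ℕ) :
    (occCount (pref x N) w : ℝ) / N ≤ 1 := by
  rcases Nat.eq_zero_or_pos N with h | h
  · subst h; simp
  · have h1 : occCount (pref x N) w ≤ N := by
      have := occCount_le (pref x N) w hw
      rwa [pref_length] at this
    rw [div_le_one (by exact_mod_cast h : (0:ℝ) < N)]
    exact_mod_cast h1

/-- the j-th block of length t*m, as an m-tuple of t-blocks -/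
def blockV (x : ℕ → Fin k) (t m j : ℕ) : Fin m → Fin t → Fin k :=
  fun s i => x (t * m * j + (t * (s : ℕ) + (i : ℕ)))

/-- the word associated to an m-tuple of t-blocks -/
def Wrd {t m : ℕ} (ω : Fin m → Fin t → Fin k) : List (Fin k) :=
  List.ofFn (fun i : Fin (t * m) =>
    ω ⟨(i : ℕ) / t, by
        have hpos := i.pos
        have ht : 0 < t := by
          rcases Nat.eq_zero_or_pos t with h | h
          · rw [h, Nat.zero_mul] at hpos; exact absurd hpos (lt_irrefl 0)
          · exact h
        exact (Nat.div_lt_iff_lt_mul ht).2 (lt_of_lt_of_le i.isLt (Nat.mul_comm t m).le)⟩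
      ⟨(i : ℕ) % t, by
        have hpos := i.pos
        have ht : 0 < t := by
          rcases Nat.eq_zero_or_pos t with h | h
          · rw [h, Nat.zero_mul] at hpos; exact absurd hpos (lt_irrefl 0)
          · exact h
        exact Nat.mod_lt _ ht⟩)

lemma Wrd_length {t m : ℕ} (ω : Fin m → Fin t → Fin k) : (Wrd ω).length = t * m := by
  simp [Wrd]

lemma Wrd_blockV (x : ℕ → Fin k) (t m j : ℕ) :
    Wrd (blockV x t m j) = blockW x (t * m) j := by
  rw [Wrd, blockW]
  apply congrArg
  funext i
  simp only [blockV, blockF]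
  congr 1
  have := Nat.div_add_mod (i : ℕ) t
  omega

lemma inner_count (x : ℕ → Fin k) (t m j : ℕ) (u : List (Fin k)) :
    ((Finset.range m).filter (fun s => blockW x t (m * j + s) = u)).card
      = Sct u (blockV x t m j) := by
  classical
  rw [card_filter_range_fin m (fun s => blockW x t (m * j + s) = u), Sct]
  congr 1
  apply Finset.filter_congr
  intro s _
  have : blockW x t (m * j + (s : ℕ)) = List.ofFn (blockV x t m j s) := by
    rw [blockW]
    apply congrArg
    funext i
    simp only [blockV, blockF]
    congr 1
    ring
  rw [this]

set_option maxHeartbeats 2000000 in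
lemma direction2 (hk : 0 < k) {x : ℕ → Fin k} {C : ℝ}
    (hot : ∀ ℓ : ℕ, 0 < ℓ → ∀ u : List (Fin k), u.length = ℓ →
        Filter.limsup (fun n : ℕ => (occCount (pref x n) u : ℝ) / (n : ℝ)) atTop
          < C / (k : ℝ) ^ ℓ)
    {t : ℕ} (ht : 0 < t) (u : List (Fin k)) (hu : u.length = t) :
    Tendsto (fun n : ℕ => (alocc (pref x (t * n)) u : ℝ) / (n : ℝ)) atTop
      (𝓝 (1 / (k : ℝ) ^ t)) := by
  classical
  have hk1 : (1 : ℝ) ≤ (k : ℝ) := by exact_mod_cast hk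
  set p : ℝ := 1 / (k : ℝ) ^ t with hp
  have hp0 : 0 < p := by positivity
  have hp1 : p ≤ 1 := by
    rw [hp]; apply div_le_one_of_le₀ (one_le_pow₀ hk1) (by positivity)
  have hC : 0 < C := by
    have h1 := hot t ht u hu
    have h2 : (0:ℝ) ≤ Filter.limsup (fun n : ℕ => (occCount (pref x n) u : ℝ) / (n : ℝ)) atTop := by
      apply Filter.le_limsup_of_frequently_le
      · apply Filter.Frequently.of_forall
        intro n
        positivity
      · apply Filter.isBoundedUnder_of
        exact ⟨1, fun N => occ_div_le_one x u (by omega) N⟩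
    have h3 : (0:ℝ) < C / (k:ℝ)^t := lt_of_le_of_lt h2 h1
    have h4 : (0:ℝ) < (k:ℝ)^t := by positivity
    by_contra hc
    push_neg at hc
    have : C / (k:ℝ)^t ≤ 0 := div_nonpos_of_nonpos_of_nonneg hc (le_of_lt h4)
    linarith
  rw [Metric.tendsto_atTop]
  intro ε hε
  set ε' : ℝ := ε / 16 with hε'
  have hε'0 : 0 < ε' := by rw [hε']; linarith
  -- choose m
  obtain ⟨m0, hm0⟩ := exists_nat_ge (48 * C * t / (ε' ^ 4 * ε))
  set m := m0 + 1 with hm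
  have hm1 : 1 ≤ m := by omega
  have hmR : (48 * C * t / (ε' ^ 4 * ε)) ≤ (m : ℝ) := by
    calc (48 * C * t / (ε' ^ 4 * ε)) ≤ (m0 : ℝ) := hm0
      _ ≤ (m : ℝ) := by exact_mod_cast Nat.le_succ m0
  have hm0R : (0:ℝ) < m := by exact_mod_cast hm1
  set ℓ := t * m with hℓ
  have hl0 : 0 < ℓ := by positivity
  have hKl : (0:ℝ) < (k:ℝ) ^ ℓ := by positivity
  -- the bad set
  set Bad : (Fin m → Fin t → Fin k) → Prop :=
    fun ω => ε' * m < |(Sct u ω : ℝ) - (m : ℝ) * p| with hBad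
  set B := ((Finset.univ : Finset (Fin m → Fin t → Fin k))).filter Bad with hB
  have hBcard : (B.card : ℝ) ≤ 3 * (k : ℝ) ^ ℓ / (ε' ^ 4 * (m : ℝ) ^ 2) :=
    bad_card hk u hu hε'0 (by omega)
  -- the key numeric bound
  have hkey : (B.card : ℝ) * (C / (k:ℝ)^ℓ * ℓ) ≤ ε / 16 := by
    have h1 : (B.card : ℝ) * (C / (k:ℝ)^ℓ * ℓ)
        ≤ (3 * (k : ℝ) ^ ℓ / (ε' ^ 4 * (m : ℝ) ^ 2)) * (C / (k:ℝ)^ℓ * ℓ) := by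
      apply mul_le_mul_of_nonneg_right hBcard
      positivity
    have h2 : (3 * (k : ℝ) ^ ℓ / (ε' ^ 4 * (m : ℝ) ^ 2)) * (C / (k:ℝ)^ℓ * ℓ)
        = 3 * C * t / (ε' ^ 4 * m) := by
      rw [hℓ]
      push_cast
      field_simp
    rw [h2] at h1
    have h3 : 3 * C * t / (ε' ^ 4 * m) ≤ ε / 16 := by
      rw [div_le_iff₀ (by positivity)]
      rw [div_le_iff₀ (by positivity)] at hmR
      have ht1 : (1:ℝ) ≤ t := by exact_mod_cast ht
      nlinarith [hε'0, hm0R, hC, ht1, pow_pos hε'0 4]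
    linarith
  -- counting identities
  have hA : ∀ n : ℕ, alocc (pref x (t * n)) u
      = ((Finset.range n).filter (fun i => blockW x t i = u)).card :=
    fun n => alocc_pref ht hu
  have hSq : ∀ q : ℕ, ((Finset.range (m * q)).filter (fun i => blockW x t i = u)).card
      = ∑ j ∈ Finset.range q, Sct u (blockV x t m j) := by
    intro q
    rw [card_filter_range_mul m q (fun i => blockW x t i = u)]
    exact Finset.sum_congr rfl (fun j _ => inner_count x t m j u)
  have hSct_le : ∀ j, Sct u (blockV x t m j) ≤ m := by
    intro j
    calc Sct u (blockV x t m j) ≤ (Finset.univ : Finset (Fin m)).card :=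
          Finset.card_filter_le _ _
      _ = m := by simp
  have hAbound : ∀ n : ℕ, (∑ j ∈ Finset.range (n / m), Sct u (blockV x t m j))
      ≤ alocc (pref x (t * n)) u ∧ alocc (pref x (t * n)) u
      ≤ (∑ j ∈ Finset.range (n / m), Sct u (blockV x t m j)) + m := by
    intro n
    have hdm := Nat.div_add_mod n m
    have hmod := Nat.mod_lt n (show 0 < m by omega)
    constructor
    · rw [hA n, ← hSq (n / m)]
      apply Finset.card_le_card
      apply Finset.filter_subset_filter
      apply Finset.range_subset_range.2
      omega
    · have h1 : alocc (pref x (t * n)) u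
          ≤ ((Finset.range (m * (n / m + 1))).filter (fun i => blockW x t i = u)).card := by
        rw [hA n]
        apply Finset.card_le_card
        apply Finset.filter_subset_filter
        apply Finset.range_subset_range.2
        have hexp : m * (n / m + 1) = m * (n / m) + m := by ring
        omega
      rw [hSq (n / m + 1), Finset.sum_range_succ] at h1
      have := hSct_le (n / m)
      omega
  -- the fiber bound from the hotspot hypothesis
  have hfiber_ev : ∀ᶠ q : ℕ in atTop, ∀ ω ∈ B,
      ((((Finset.range q).filter (fun j => blockV x t m j = ω)).card : ℝ))
        ≤ C / (k:ℝ)^ℓ * (ℓ * q) := by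
    rw [Filter.eventually_all_finset]
    intro ω _
    have hlen : (Wrd ω).length = ℓ := Wrd_length ω
    have hls := hot ℓ hl0 (Wrd ω) hlen
    have hev : ∀ᶠ N : ℕ in atTop, (occCount (pref x N) (Wrd ω) : ℝ) / N < C / (k:ℝ)^ℓ := by
      refine Filter.eventually_lt_of_limsup_lt hls ?_
      apply Filter.isBoundedUnder_of
      exact ⟨1, fun N => occ_div_le_one x (Wrd ω) (by rw [hlen]; exact hl0) N⟩
    have hlq : Tendsto (fun q : ℕ => ℓ * q) atTop atTop := by
      rw [tendsto_atTop_atTop]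
      intro b
      exact ⟨b, fun a hab => le_trans hab (Nat.le_mul_of_pos_left a hl0)⟩
    filter_upwards [hlq.eventually hev, eventually_ge_atTop 1] with q hq hq1
    have hlq0 : (0:ℝ) < (ℓ * q : ℕ) := by
      have : 0 < ℓ * q := by positivity
      exact_mod_cast this
    rw [div_lt_iff₀ hlq0] at hq
    have hcount : (((Finset.range q).filter (fun j => blockV x t m j = ω)).card : ℝ)
        ≤ (occCount (pref x (ℓ * q)) (Wrd ω) : ℝ) := by
      have hsub : ((Finset.range q).filter (fun j => blockV x t m j = ω)).card
          ≤ alocc (pref x (ℓ * q)) (Wrd ω) := by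
        rw [alocc_pref hl0 hlen]
        apply Finset.card_le_card
        intro j hj
        rw [Finset.mem_filter] at hj ⊢
        refine ⟨hj.1, ?_⟩
        rw [← Wrd_blockV x t m j, hj.2]
      have h2 := alocc_le_occCount (pref x (ℓ * q)) (Wrd ω) (by rw [hlen]; exact hl0)
      exact_mod_cast le_trans hsub h2
    calc (((Finset.range q).filter (fun j => blockV x t m j = ω)).card : ℝ)
        ≤ (occCount (pref x (ℓ * q)) (Wrd ω) : ℝ) := hcount
      _ ≤ C / (k:ℝ)^ℓ * (ℓ * q) := by
          push_cast at hq ⊢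
          linarith
  -- bound on the number of bad blocks
  have hNB_ev : ∀ᶠ q : ℕ in atTop,
      ((((Finset.range q).filter (fun j => Bad (blockV x t m j))).card : ℝ)) ≤ ε / 16 * q := by
    filter_upwards [hfiber_ev] with q hq
    have hpart : (((Finset.range q).filter (fun j => Bad (blockV x t m j))).card)
        = ∑ ω ∈ B, (((Finset.range q).filter (fun j => Bad (blockV x t m j))).filter
            (fun j => blockV x t m j = ω)).card := by
      apply Finset.card_eq_sum_card_fiberwise
      intro j hj
      rw [hB, Finset.mem_coe, Finset.mem_filter]
      exact ⟨Finset.mem_univ _, (Finset.mem_filter.1 (Finset.mem_coe.1 hj)).2⟩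
    have hle : ∀ ω ∈ B, ((((Finset.range q).filter (fun j => Bad (blockV x t m j))).filter
        (fun j => blockV x t m j = ω)).card : ℝ) ≤ C / (k:ℝ)^ℓ * (ℓ * q) := by
      intro ω hω
      have h1 : (((Finset.range q).filter (fun j => Bad (blockV x t m j))).filter
          (fun j => blockV x t m j = ω)).card
          ≤ ((Finset.range q).filter (fun j => blockV x t m j = ω)).card := by
        apply Finset.card_le_card
        intro j hj
        rw [Finset.mem_filter] at hj ⊢
        exact ⟨(Finset.mem_filter.1 hj.1).1, hj.2⟩
      calc ((((Finset.range q).filter (fun j => Bad (blockV x t m j))).filter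
          (fun j => blockV x t m j = ω)).card : ℝ)
          ≤ (((Finset.range q).filter (fun j => blockV x t m j = ω)).card : ℝ) := by
            exact_mod_cast h1
        _ ≤ C / (k:ℝ)^ℓ * (ℓ * q) := hq ω hω
    calc ((((Finset.range q).filter (fun j => Bad (blockV x t m j))).card : ℝ))
        = ∑ ω ∈ B, ((((Finset.range q).filter (fun j => Bad (blockV x t m j))).filter
            (fun j => blockV x t m j = ω)).card : ℝ) := by
          rw [hpart]; push_cast; rfl
      _ ≤ ∑ _ω ∈ B, C / (k:ℝ)^ℓ * (ℓ * q) := Finset.sum_le_sum hle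
      _ = (B.card : ℝ) * (C / (k:ℝ)^ℓ * (ℓ * q)) := by
          rw [Finset.sum_const, nsmul_eq_mul]
      _ = ((B.card : ℝ) * (C / (k:ℝ)^ℓ * ℓ)) * q := by ring
      _ ≤ ε / 16 * q := by
          apply mul_le_mul_of_nonneg_right hkey (by positivity)
  -- q tends to infinity
  have hqt : Tendsto (fun n : ℕ => n / m) atTop atTop := by
    rw [tendsto_atTop_atTop]
    intro b
    exact ⟨b * m, fun n hn => (Nat.le_div_iff_mul_le (by omega : 0 < m)).2 hn⟩
  obtain ⟨Q, hQ⟩ := exists_nat_ge (8 / ε)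
  -- the main eventual estimate
  have hmain : ∀ᶠ n : ℕ in atTop,
      |(alocc (pref x (t * n)) u : ℝ) / n - p| ≤ ε / 2 := by
    filter_upwards [hqt.eventually hNB_ev, hqt.eventually (eventually_ge_atTop (Q + 1))]
      with n hNB hq1
    set q := n / m with hqdef
    have hq1' : 1 ≤ q := by omega
    have hqR : (8 : ℝ) / ε ≤ q := by
      calc (8:ℝ) / ε ≤ Q := hQ
        _ ≤ q := by exact_mod_cast Nat.le_of_succ_le hq1
    have hqR0 : (0:ℝ) < q := by
      have : (0:ℕ) < q := hq1'
      exact_mod_cast this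
    obtain ⟨hlow, hhigh⟩ := hAbound n
    set Sq := ∑ j ∈ Finset.range q, Sct u (blockV x t m j) with hSqdef
    set NB := (((Finset.range q).filter (fun j => Bad (blockV x t m j))).card : ℝ) with hNBdef
    have hNB0 : 0 ≤ NB := by positivity
    -- deviation of Sq
    have hSdev : |(Sq : ℝ) - q * m * p| ≤ ε' * m * q + m * NB := by
      have h1 : (Sq : ℝ) - q * m * p
          = ∑ j ∈ Finset.range q, ((Sct u (blockV x t m j) : ℝ) - m * p) := by
        rw [Finset.sum_sub_distrib, Finset.sum_const, Finset.card_range, nsmul_eq_mul, hSqdef]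
        push_cast
        ring
      rw [h1]
      calc |∑ j ∈ Finset.range q, ((Sct u (blockV x t m j) : ℝ) - m * p)|
          ≤ ∑ j ∈ Finset.range q, |(Sct u (blockV x t m j) : ℝ) - m * p| :=
            Finset.abs_sum_le_sum_abs _ _
        _ = (∑ j ∈ (Finset.range q).filter (fun j => Bad (blockV x t m j)),
              |(Sct u (blockV x t m j) : ℝ) - m * p|)
            + ∑ j ∈ (Finset.range q).filter (fun j => ¬ Bad (blockV x t m j)),
              |(Sct u (blockV x t m j) : ℝ) - m * p| :=
            (Finset.sum_filter_add_sum_filter_not _ _ _).symm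
        _ ≤ (∑ _j ∈ (Finset.range q).filter (fun j => Bad (blockV x t m j)), (m : ℝ))
            + ∑ _j ∈ (Finset.range q).filter (fun j => ¬ Bad (blockV x t m j)), ε' * m := by
            apply add_le_add
            · apply Finset.sum_le_sum
              intro j _
              have hle := hSct_le j
              have hle' : ((Sct u (blockV x t m j) : ℝ)) ≤ m := by exact_mod_cast hle
              have h0 : (0:ℝ) ≤ (Sct u (blockV x t m j) : ℝ) := by positivity
              have hmp0 : (0:ℝ) ≤ m * p := by positivity
              have hmp1 : m * p ≤ m := by nlinarith
              rw [abs_le]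
              constructor <;> linarith
            · apply Finset.sum_le_sum
              intro j hj
              rw [Finset.mem_filter] at hj
              exact not_lt.1 hj.2
        _ ≤ NB * m + q * (ε' * m) := by
            rw [Finset.sum_const, Finset.sum_const, nsmul_eq_mul, nsmul_eq_mul]
            apply add_le_add
            · apply le_of_eq; rw [hNBdef]
            · apply mul_le_mul_of_nonneg_right _ (by positivity)
              have : ((Finset.range q).filter (fun j => ¬ Bad (blockV x t m j))).card ≤ q := by
                calc ((Finset.range q).filter (fun j => ¬ Bad (blockV x t m j))).card
                    ≤ (Finset.range q).card := Finset.card_filter_le _ _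
                  _ = q := Finset.card_range q
              exact_mod_cast this
        _ = ε' * m * q + m * NB := by ring
    -- deviation of A n
    have hnq2 : q * m ≤ n := Nat.div_mul_le_self n m
    have hnq' : (q : ℝ) * m ≤ n := by exact_mod_cast hnq2
    have hn1 : (1:ℝ) ≤ n := by
      have : 1 * 1 ≤ (q:ℝ) * m := by
        apply mul_le_mul (by exact_mod_cast hq1') (by exact_mod_cast hm1) (by norm_num) (by positivity)
      linarith
    have hn0 : (0:ℝ) < n := by linarith
    have hnm : (n : ℝ) - q * m ≤ m := by
      have hdm : m * q + n % m = n := Nat.div_add_mod n m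
      have hmod := Nat.mod_lt n (show 0 < m by omega)
      have hnc : (m : ℝ) * q + ((n % m : ℕ) : ℝ) = n := by exact_mod_cast hdm
      have hmod' : ((n % m : ℕ) : ℝ) ≤ m := by exact_mod_cast le_of_lt hmod
      linarith
    have hAdev : |(alocc (pref x (t * n)) u : ℝ) - n * p| ≤ 2 * m + ε' * m * q + m * NB := by
      have hAS : |(alocc (pref x (t * n)) u : ℝ) - Sq| ≤ m := by
        have h1 : ((Sq : ℕ) : ℝ) ≤ (alocc (pref x (t * n)) u : ℝ) := by exact_mod_cast hlow
        have h2 : (alocc (pref x (t * n)) u : ℝ) ≤ (Sq : ℝ) + m := by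
          have := hhigh
          have h3 : ((alocc (pref x (t * n)) u : ℕ) : ℝ) ≤ ((Sq + m : ℕ) : ℝ) := by
            exact_mod_cast this
          push_cast at h3
          have hmcast : (m : ℝ) = (m0 : ℝ) + 1 := by rw [hm]; push_cast; ring
          linarith
        rw [abs_le]
        constructor <;> linarith [hm0R]
      have hqn : |(q : ℝ) * m * p - n * p| ≤ m := by
        have h1 : (q : ℝ) * m * p - n * p = -(((n:ℝ) - q * m) * p) := by ring
        rw [h1, abs_neg]
        have h2 : (0:ℝ) ≤ ((n:ℝ) - q * m) * p := by
          apply mul_nonneg _ (le_of_lt hp0)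
          linarith
        rw [abs_of_nonneg h2]
        nlinarith [hnm, hp1, hp0, hm0R]
      calc |(alocc (pref x (t * n)) u : ℝ) - n * p|
          ≤ |(alocc (pref x (t * n)) u : ℝ) - Sq| + |(Sq : ℝ) - q * m * p|
            + |(q : ℝ) * m * p - n * p| := by
            have := abs_sub_le ((alocc (pref x (t * n)) u : ℝ)) (Sq : ℝ) ((q:ℝ) * m * p)
            have h2 := abs_sub_le ((alocc (pref x (t * n)) u : ℝ)) ((q:ℝ) * m * p) ((n:ℝ) * p)
            linarith
        _ ≤ m + (ε' * m * q + m * NB) + m := by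
            apply add_le_add (add_le_add hAS hSdev) hqn
        _ = 2 * m + ε' * m * q + m * NB := by ring
    -- divide by n
    have hqm0 : (0:ℝ) < q * m := by positivity
    have hdiv : |(alocc (pref x (t * n)) u : ℝ) / n - p|
        ≤ (2 * m + ε' * m * q + m * NB) / (q * m) := by
      have h1 : (alocc (pref x (t * n)) u : ℝ) / n - p
          = ((alocc (pref x (t * n)) u : ℝ) - n * p) / n := by
        field_simp
      rw [h1, abs_div, abs_of_pos hn0]
      have hnum0 : (0:ℝ) ≤ 2 * m + ε' * m * q + m * NB := by positivity
      exact div_le_div₀ hnum0 hAdev hqm0 hnq'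
    have e1 : (2 * m + ε' * m * q + m * NB) / (q * m) = 2 / q + ε' + NB / q := by
      field_simp
    have e2 : NB / q ≤ ε / 16 := by
      rw [div_le_iff₀ hqR0]
      calc NB ≤ ε / 16 * q := hNB
        _ = ε / 16 * q := rfl
    have h2q : 2 / q ≤ ε / 4 := by
      rw [div_le_iff₀ hqR0]
      have h8 : (8:ℝ) ≤ ε * q := by
        have := mul_le_mul_of_nonneg_left hqR (le_of_lt hε)
        have h9 : ε * (8 / ε) = 8 := by field_simp
        linarith
      linarith
    calc |(alocc (pref x (t * n)) u : ℝ) / n - p|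
        ≤ (2 * m + ε' * m * q + m * NB) / (q * m) := hdiv
      _ = 2 / q + ε' + NB / q := e1
      _ ≤ ε / 4 + ε / 16 + ε / 16 := by
          apply add_le_add (add_le_add h2q (le_of_eq hε')) e2
      _ ≤ ε / 2 := by linarith
  obtain ⟨N, hN⟩ := Filter.eventually_atTop.1 hmain
  refine ⟨N, fun n hn => ?_⟩
  rw [Real.dist_eq]
  calc |(alocc (pref x (t * n)) u : ℝ) / n - p| ≤ ε / 2 := hN n hn
    _ < ε := by linarith
end HotSpotAux

theorem stmt16 (k : ℕ) (hk : 0 < k) (x : ℕ → Fin k) :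
    (∀ ℓ : ℕ, 0 < ℓ → ∀ v : List (Fin k), v.length = ℓ →
      Tendsto (fun n : ℕ => (alocc (pref x (ℓ * n)) v : ℝ) / (n : ℝ)) atTop
        (𝓝 (1 / (k : ℝ) ^ ℓ)))
    ↔ ∃ C : ℝ, 0 < C ∧ ∀ ℓ : ℕ, 0 < ℓ → ∀ u : List (Fin k), u.length = ℓ →
        Filter.limsup (fun n : ℕ => (occCount (pref x n) u : ℝ) / (n : ℝ)) atTop
          < C / (k : ℝ) ^ ℓ := by
  constructor
  · intro hx
    exact ⟨7, by norm_num, fun ℓ hl u hu => HotSpotAux.direction1 hk hx hl u hu⟩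
  · rintro ⟨C, _, hot⟩
    intro ℓ hl v hv
    exact HotSpotAux.direction2 hk hot hl v hv
end

section
/- If an infinite word u over alphabet A is normal, then for every finite prefix p of u, the tail of u after removing p is also normal. -/
open Filter Topology

open Finset

namespace S19
variable {k : ℕ}

def seg (u : ℕ → Fin k) (ℓ p : ℕ) : List (Fin k) := (List.range ℓ).map (fun t => u (p + t))

@[simp] lemma length_seg (u : ℕ → Fin k) (ℓ p : ℕ) : (seg u ℓ p).length = ℓ := by simp [seg]

@[simp] lemma getElem_seg (u : ℕ → Fin k) (ℓ p j : ℕ) (hj : j < ℓ) :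
    (seg u ℓ p)[j]'(by simpa using hj) = u (p + j) := by simp [seg]

def cnt (u : ℕ → Fin k) (v : List (Fin k)) (step start n : ℕ) : ℕ :=
  ∑ i ∈ Finset.range n, if seg u v.length (start + i * step) = v then 1 else 0

lemma list_filter_len (p : ℕ → Bool) (n : ℕ) :
    ((List.range n).filter p).length = ∑ i ∈ Finset.range n, if p i then 1 else 0 := by
  induction n with
  | zero => simp
  | succ n ih =>
    rw [List.range_succ, List.filter_append, List.length_append, ih, Finset.sum_range_succ]
    congr 1
    by_cases h : p n <;> simp [List.filter, h]

lemma pref_drop_take (w : ℕ → Fin k) {a ℓ N : ℕ} (h : a + ℓ ≤ N) :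
    ((pref w N).drop a).take ℓ = seg w ℓ a := by
  apply List.ext_getElem
  · simp [pref, seg]; omega
  · intro j h1 h2
    have hj : j < ℓ := by simpa using h2
    have : a + j < N := by omega
    simp [pref, seg, List.getElem_take, List.getElem_drop]

lemma alocc_pref (w : ℕ → Fin k) {ℓ : ℕ} (hℓ : 0 < ℓ) (v : List (Fin k)) (hv : v.length = ℓ)
    (n : ℕ) : alocc (pref w (ℓ * n)) v = cnt w v ℓ 0 n := by
  unfold alocc cnt
  have hlen : (pref w (ℓ * n)).length = ℓ * n := by simp [pref]
  rw [hlen, hv, Nat.mul_div_cancel_left n hℓ, list_filter_len]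
  apply Finset.sum_congr rfl
  intro i hi
  have hi' : i < n := Finset.mem_range.1 hi
  have h : i * ℓ + ℓ ≤ ℓ * n := by nlinarith
  rw [pref_drop_take w h]
  simp [hv, zero_add]

lemma seg_drop_take (u : ℕ → Fin k) (p : ℕ) {o ℓ M : ℕ} (h : o + ℓ ≤ M) :
    ((seg u M p).drop o).take ℓ = seg u ℓ (p + o) := by
  apply List.ext_getElem
  · simp; omega
  · intro j h1 h2
    have hj : j < ℓ := by simpa using h2
    have : o + j < M := by omega
    simp [seg, List.getElem_take, List.getElem_drop, Nat.add_assoc]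

lemma cnt_eq_sum_blocks (u : ℕ → Fin k) (v : List (Fin k)) {M o : ℕ}
    (h : o + v.length ≤ M) (n : ℕ) :
    cnt u v M o n =
      ∑ p : List.Vector (Fin k) o × List.Vector (Fin k) (M - (o + v.length)),
        cnt u (p.1.toList ++ v ++ p.2.toList) M 0 n := by
  set ℓ := v.length with hℓ
  unfold cnt
  rw [Finset.sum_comm]
  apply Finset.sum_congr rfl
  intro i _
  have hlen : ∀ p : List.Vector (Fin k) o × List.Vector (Fin k) (M - (o + ℓ)),
      (p.1.toList ++ v ++ p.2.toList).length = M := by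
    intro p
    simp [List.Vector.toList_length]
    omega
  set W := seg u M (0 + i * M) with hW
  have hWlen : W.length = M := by simp [hW]
  have hmid : (W.drop o).take ℓ = seg u ℓ (o + i * M) := by
    rw [hW, seg_drop_take u _ h]
    congr 1
    ring
  -- rewrite the inner conditions using hlen
  have : ∀ p : List.Vector (Fin k) o × List.Vector (Fin k) (M - (o + ℓ)),
      (if seg u (p.1.toList ++ v ++ p.2.toList).length (0 + i * M) = p.1.toList ++ v ++ p.2.toList
        then (1:ℕ) else 0)
      = if W = p.1.toList ++ v ++ p.2.toList then 1 else 0 := by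
    intro p; rw [hlen p]
  rw [Finset.sum_congr rfl (fun p _ => this p), Finset.sum_boole, Nat.cast_id]
  by_cases hmatch : seg u ℓ (o + i * M) = v
  · rw [if_pos hmatch]
    have hA : (W.take o).length = o := by rw [List.length_take]; omega
    have hB : (W.drop (o + ℓ)).length = M - (o + ℓ) := by rw [List.length_drop]; omega
    set p0 : List.Vector (Fin k) o × List.Vector (Fin k) (M - (o + ℓ)) :=
      (⟨W.take o, hA⟩, ⟨W.drop (o + ℓ), hB⟩) with hp0
    have hsplit : W = W.take o ++ v ++ W.drop (o + ℓ) := by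
      conv_lhs => rw [← List.take_append_drop o W]
      rw [List.append_assoc]
      congr 1
      conv_lhs => rw [← List.take_append_drop ℓ (W.drop o)]
      rw [hmid, hmatch, List.drop_drop]
    have hfilter : Finset.univ.filter
        (fun p : List.Vector (Fin k) o × List.Vector (Fin k) (M - (o + ℓ)) =>
          W = p.1.toList ++ v ++ p.2.toList) = {p0} := by
      ext p
      simp only [Finset.mem_filter, Finset.mem_univ, true_and, Finset.mem_singleton]
      constructor
      · intro hp
        have h1 : p.1.toList = W.take o := by
          rw [hp, List.append_assoc, List.take_left' (by simp)]
        have h2 : p.2.toList = W.drop (o + ℓ) := by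
          rw [hp, List.drop_left' (by simp [hℓ])]
        have e1 : p.1 = p0.1 := List.Vector.toList_injective (by rw [h1]; rfl)
        have e2 : p.2 = p0.2 := List.Vector.toList_injective (by rw [h2]; rfl)
        exact Prod.ext e1 e2
      · rintro rfl
        simpa [hp0] using hsplit
    rw [hfilter, Finset.card_singleton]
  · rw [if_neg hmatch]
    symm
    rw [Finset.card_eq_zero]
    apply Finset.filter_eq_empty_iff.2
    intro p _
    intro hp
    apply hmatch
    rw [← hmid, hp, List.append_assoc, List.drop_left' (by simp), List.take_left' (by simp [hℓ])]

lemma cnt_tendsto (hk : 0 < k) (u : ℕ → Fin k)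
    (hu : ∀ w : List (Fin k), 0 < w.length →
      Tendsto (fun n : ℕ => (cnt u w w.length 0 n : ℝ) / (n : ℝ)) atTop
        (𝓝 (1 / (k : ℝ) ^ w.length)))
    (v : List (Fin k)) (hv : 0 < v.length) {M o : ℕ} (h : o + v.length ≤ M) :
    Tendsto (fun n : ℕ => (cnt u v M o n : ℝ) / (n : ℝ)) atTop
      (𝓝 (1 / (k : ℝ) ^ v.length)) := by
  set ℓ := v.length with hℓ
  have hM : 0 < M := by omega
  have hk0 : (k : ℝ) ≠ 0 := Nat.cast_ne_zero.2 hk.ne'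
  have key : ∀ n, (cnt u v M o n : ℝ) / n =
      ∑ p : List.Vector (Fin k) o × List.Vector (Fin k) (M - (o + ℓ)),
        (cnt u (p.1.toList ++ v ++ p.2.toList) M 0 n : ℝ) / n := by
    intro n
    rw [cnt_eq_sum_blocks u v h n]
    push_cast
    rw [Finset.sum_div]
  have hlim : ∀ p : List.Vector (Fin k) o × List.Vector (Fin k) (M - (o + ℓ)),
      Tendsto (fun n : ℕ => (cnt u (p.1.toList ++ v ++ p.2.toList) M 0 n : ℝ) / n) atTop
        (𝓝 (1 / (k : ℝ) ^ M)) := by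
    intro p
    have hlen : (p.1.toList ++ v ++ p.2.toList).length = M := by
      simp [List.Vector.toList_length]; omega
    have := hu (p.1.toList ++ v ++ p.2.toList) (by rw [hlen]; exact hM)
    rw [hlen] at this
    exact this
  have hsum := tendsto_finset_sum Finset.univ (fun p _ => hlim p)
  have hcard : (Fintype.card
      (List.Vector (Fin k) o × List.Vector (Fin k) (M - (o + ℓ))) : ℝ)
      = (k : ℝ) ^ o * (k : ℝ) ^ (M - (o + ℓ)) := by
    rw [Fintype.card_prod, card_vector, card_vector, Fintype.card_fin]
    push_cast
    ring
  have hval : ∑ _p : List.Vector (Fin k) o × List.Vector (Fin k) (M - (o + ℓ)),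
      (1 / (k : ℝ) ^ M) = 1 / (k : ℝ) ^ ℓ := by
    rw [Finset.sum_const, Finset.card_univ, nsmul_eq_mul, hcard]
    have hpow : (k : ℝ) ^ o * (k : ℝ) ^ (M - (o + ℓ)) * (k : ℝ) ^ ℓ = (k : ℝ) ^ M := by
      rw [← pow_add, ← pow_add]
      congr 1
      omega
    field_simp
    linarith [hpow]
  rw [← hval]
  apply Tendsto.congr (fun n => (key n).symm) hsum

lemma sum_shift (χ : ℕ → ℕ) (a b : ℕ) :
    ∑ j ∈ Finset.range (a + b), χ j
      = ∑ j ∈ Finset.range a, χ j + ∑ s ∈ Finset.range b, χ (a + s) := by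
  induction b with
  | zero => simp
  | succ b ih =>
    rw [← Nat.add_assoc, Finset.sum_range_succ, ih, Finset.sum_range_succ, Nat.add_assoc]

lemma grid (χ : ℕ → ℕ) (m T : ℕ) :
    ∑ j ∈ Finset.range (T * m), χ j
      = ∑ s ∈ Finset.range m, ∑ t ∈ Finset.range T, χ (t * m + s) := by
  induction T with
  | zero => simp
  | succ T ih =>
    rw [Nat.succ_mul, sum_shift, ih, ← Finset.sum_add_distrib]
    apply Finset.sum_congr rfl
    intro s _
    rw [Finset.sum_range_succ]

lemma lt_div_succ_mul (a b : ℕ) (hb : 0 < b) : a < (a / b + 1) * b := by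
  have h1 := Nat.div_add_mod a b
  have h2 := Nat.mod_lt a hb
  have h3 : a < b * (a / b) + b := by omega
  calc a < b * (a / b) + b := h3
    _ = (a / b + 1) * b := by ring

end S19

set_option maxHeartbeats 2000000 in
open S19 in
theorem stmt19 (k : ℕ) (hk : 0 < k) (u : ℕ → Fin k)
    (hu : ∀ ℓ : ℕ, 0 < ℓ → ∀ v : List (Fin k), v.length = ℓ →
      Tendsto (fun n : ℕ => (alocc (pref u (ℓ * n)) v : ℝ) / (n : ℝ)) atTop
        (𝓝 (1 / (k : ℝ) ^ ℓ)))
    (L : ℕ) :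
    ∀ ℓ : ℕ, 0 < ℓ → ∀ v : List (Fin k), v.length = ℓ →
      Tendsto (fun n : ℕ => (alocc (pref (fun i => u (i + L)) (ℓ * n)) v : ℝ) / (n : ℝ)) atTop
        (𝓝 (1 / (k : ℝ) ^ ℓ)) := by
  intro ℓ hℓ v hv
  have hucnt : ∀ w : List (Fin k), 0 < w.length →
      Tendsto (fun n : ℕ => (cnt u w w.length 0 n : ℝ) / (n : ℝ)) atTop
        (𝓝 (1 / (k : ℝ) ^ w.length)) := by
    intro w hw
    apply (hu w.length hw w rfl).congr
    intro n
    rw [alocc_pref u hw w rfl n]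
  set r := L % ℓ with hr
  set q := L / ℓ with hq
  have hrℓ : r < ℓ := Nat.mod_lt _ hℓ
  have hLqr : ℓ * q + r = L := Nat.div_add_mod L ℓ
  set χ : ℕ → ℕ := fun j => if seg u ℓ (j * ℓ + r) = v then 1 else 0 with hχ
  set A : ℕ → ℕ := fun n => ∑ i ∈ Finset.range n, χ (q + i) with hA
  have hχ1 : ∀ j, χ j ≤ 1 := by
    intro j; rw [hχ]; dsimp only; split <;> simp
  -- the target counting function equals A
  have htarget : ∀ n, alocc (pref (fun i => u (i + L)) (ℓ * n)) v = A n := by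
    intro n
    rw [alocc_pref (fun i => u (i + L)) hℓ v hv n, hA]
    unfold cnt
    apply Finset.sum_congr rfl
    intro i _
    have hseg : seg (fun j => u (j + L)) v.length (0 + i * ℓ) = seg u ℓ ((q + i) * ℓ + r) := by
      simp only [S19.seg, hv]
      congr 1
      funext t
      congr 1
      rw [← hLqr]
      ring
    rw [hχ, hseg]
  -- counts at offsets s*ℓ+r on the m-grid, as sums of χ
  have hCs : ∀ m s T, cnt u v (m * ℓ) (s * ℓ + r) T = ∑ t ∈ Finset.range T, χ (t * m + s) := by
    intro m s T
    unfold cnt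
    apply Finset.sum_congr rfl
    intro t _
    have hpos : s * ℓ + r + t * (m * ℓ) = (t * m + s) * ℓ + r := by ring
    rw [hχ, hv, hpos]
  set D : ℕ → ℕ := fun N => ∑ j ∈ Finset.range N, χ j with hD
  have hDA : ∀ n, D (q + n) = D q + A n := fun n => sum_shift χ q n
  have hDmono : ∀ {N₁ N₂}, N₁ ≤ N₂ → D N₁ ≤ D N₂ := by
    intro N₁ N₂ h
    exact Finset.sum_le_sum_of_subset (Finset.range_subset_range.2 h)
  have hgrid : ∀ m T, D (T * m) = ∑ s ∈ Finset.range m, ∑ t ∈ Finset.range T, χ (t * m + s) :=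
    fun m T => grid χ m T
  have hCle : ∀ m s T, (∑ t ∈ Finset.range T, χ (t * m + s)) ≤ T := by
    intro m s T
    calc (∑ t ∈ Finset.range T, χ (t * m + s)) ≤ ∑ t ∈ Finset.range T, 1 :=
          Finset.sum_le_sum (fun t _ => hχ1 _)
      _ = T := by simp
  set c : ℝ := 1 / (k : ℝ) ^ ℓ with hc
  have hk1 : (1:ℝ) ≤ (k:ℝ) := by exact_mod_cast hk
  have hkpow : (1:ℝ) ≤ (k:ℝ) ^ ℓ := one_le_pow₀ hk1
  have hc0 : 0 < c := by positivity
  have hc1 : c ≤ 1 := by rw [hc, div_le_one (by linarith)]; linarith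
  rw [Metric.tendsto_atTop]
  intro ε hε
  obtain ⟨m₀, hm₀⟩ := exists_nat_gt (2 / ε)
  set m := m₀ + 2 with hm
  have hm2 : 2 ≤ m := by omega
  have hm0R : (0:ℝ) < m := by positivity
  have hmε : 1 / (m:ℝ) < ε / 2 := by
    have h1 : (2:ℝ) / ε < m := by
      calc (2:ℝ)/ε < m₀ := hm₀
        _ ≤ m := by exact_mod_cast Nat.le_add_right m₀ 2
    rw [div_lt_iff₀ hε] at h1
    rw [div_lt_div_iff₀ hm0R two_pos]
    linarith
  set T : ℕ → ℕ := fun n => (q + n) / m with hT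
  have hTtop : Tendsto T atTop atTop := by
    rw [tendsto_atTop_atTop]
    intro b
    refine ⟨b * m, fun a ha => ?_⟩
    rw [hT, Nat.le_div_iff_mul_le (by omega)]
    exact le_trans ha (Nat.le_add_left _ _)
  have hTdiv : Tendsto (fun n : ℕ => (T n : ℝ) / n) atTop (𝓝 (1 / (m:ℝ))) := by
    have hup : ∀ n, (T n : ℝ) ≤ ((q:ℝ) + n) / m := by
      intro n
      rw [le_div_iff₀ hm0R]
      have : T n * m ≤ q + n := Nat.div_mul_le_self _ _
      exact_mod_cast this
    have hlo : ∀ n, ((q:ℝ) + n - m) / m ≤ (T n : ℝ) := by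
      intro n
      rw [div_le_iff₀ hm0R]
      have : q + n < (T n + 1) * m := S19.lt_div_succ_mul _ _ (by omega)
      have h2 : ((q:ℝ) + n) < (T n + 1) * m := by exact_mod_cast this
      ring_nf
      ring_nf at h2
      nlinarith
    apply tendsto_of_tendsto_of_tendsto_of_le_of_le'
      (g := fun n : ℕ => (((q:ℝ) - m) / m) * (1 / n) + 1 / m)
      (h := fun n : ℕ => ((q:ℝ) / m) * (1 / n) + 1 / m)
    · have := (tendsto_one_div_atTop_nhds_zero_nat.const_mul (((q:ℝ) - m) / m)).add_const
        (1 / (m:ℝ))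
      simpa using this
    · have := (tendsto_one_div_atTop_nhds_zero_nat.const_mul ((q:ℝ) / m)).add_const (1 / (m:ℝ))
      simpa using this
    · filter_upwards [eventually_ge_atTop 1] with n hn
      have hn0 : (0:ℝ) < n := by exact_mod_cast hn
      have := hlo n
      have h3 : ((q:ℝ) + n - m) / m / n ≤ (T n : ℝ) / n := by gcongr
      calc (((q:ℝ) - m) / m) * (1 / n) + 1 / m = ((q:ℝ) + n - m) / m / n := by
            field_simp; ring
        _ ≤ (T n : ℝ) / n := h3
    · filter_upwards [eventually_ge_atTop 1] with n hn
      have hn0 : (0:ℝ) < n := by exact_mod_cast hn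
      have h3 : (T n : ℝ) / n ≤ ((q:ℝ) + n) / m / n := by gcongr; exact hup n
      calc (T n : ℝ) / n ≤ ((q:ℝ) + n) / m / n := h3
        _ = ((q:ℝ) / m) * (1 / n) + 1 / m := by field_simp
  have hT1div : Tendsto (fun n : ℕ => ((T n + 1 : ℕ) : ℝ) / n) atTop (𝓝 (1 / (m:ℝ))) := by
    have : Tendsto (fun n : ℕ => (T n : ℝ) / n + 1 / n) atTop (𝓝 (1 / (m:ℝ) + 0)) :=
      hTdiv.add tendsto_one_div_atTop_nhds_zero_nat
    rw [add_zero] at this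
    apply this.congr
    intro n
    push_cast
    rw [add_div]
  have hT1top : Tendsto (fun n => T n + 1) atTop atTop :=
    tendsto_atTop_mono (fun n => Nat.le_add_right (T n) 1) hTtop
  -- key limit: for s < m - 1, the count over S n blocks divided by n tends to c / m
  have key5 : ∀ (S : ℕ → ℕ), Tendsto S atTop atTop →
      Tendsto (fun n : ℕ => ((S n : ℕ) : ℝ) / n) atTop (𝓝 (1 / (m:ℝ))) →
      ∀ s, s < m - 1 →
      Tendsto (fun n : ℕ => ((∑ t ∈ Finset.range (S n), χ (t * m + s)) : ℝ) / n) atTop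
        (𝓝 (c * (1 / m))) := by
    intro S hStop hSdiv s hs
    have hoff : s * ℓ + r + v.length ≤ m * ℓ := by
      rw [hv]
      have h1 : s + 2 ≤ m := by omega
      nlinarith
    have h4 := cnt_tendsto hk u hucnt v (by omega) hoff
    rw [hv] at h4
    rw [← hc] at h4
    have hcomp : Tendsto (fun n : ℕ => (cnt u v (m * ℓ) (s * ℓ + r) (S n) : ℝ) / (S n : ℝ))
        atTop (𝓝 c) := h4.comp hStop
    have hmul := hcomp.mul hSdiv
    apply hmul.congr'
    filter_upwards [hStop.eventually_ge_atTop 1, eventually_ge_atTop 1] with n h1 h2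
    have hS0 : ((S n : ℕ) : ℝ) ≠ 0 := by
      have : (1:ℝ) ≤ (S n : ℕ) := by exact_mod_cast h1
      linarith
    have hn0 : ((n:ℕ) : ℝ) ≠ 0 := by
      have : (1:ℝ) ≤ (n:ℕ) := by exact_mod_cast h2
      linarith
    rw [hCs]
    field_simp
    push_cast [hχ]
    rw [Finset.sum_boole]
  -- lower bound limit
  have hLB : Tendsto (fun n : ℕ =>
      (∑ s ∈ Finset.range (m - 1), ((∑ t ∈ Finset.range (T n), χ (t * m + s)) : ℝ) / n)
        - (D q : ℝ) / n) atTop (𝓝 ((m - 1 : ℕ) * (c * (1 / m)) - 0)) := by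
    apply Tendsto.sub
    · have := tendsto_finset_sum (Finset.range (m - 1))
        (fun s hs => key5 T hTtop hTdiv s (Finset.mem_range.1 hs))
      simpa using this
    · exact tendsto_const_div_atTop_nhds_zero_nat _
  have hUB : Tendsto (fun n : ℕ =>
      (∑ s ∈ Finset.range (m - 1), ((∑ t ∈ Finset.range (T n + 1), χ (t * m + s)) : ℝ) / n)
        + ((T n + 1 : ℕ) : ℝ) / n) atTop (𝓝 ((m - 1 : ℕ) * (c * (1 / m)) + 1 / m)) := by
    apply Tendsto.add
    · have := tendsto_finset_sum (Finset.range (m - 1))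
        (fun s hs => key5 (fun n => T n + 1) hT1top hT1div s (Finset.mem_range.1 hs))
      simpa using this
    · exact hT1div
  -- numerical values of the limits
  have hmR1 : ((m - 1 : ℕ) : ℝ) = (m:ℝ) - 1 := by
    have : (1:ℕ) ≤ m := by omega
    push_cast [this]
    ring
  have hl1 : c - ε < (m - 1 : ℕ) * (c * (1 / m)) - 0 - ε / 2 := by
    rw [hmR1]
    have h5 : ((m:ℝ) - 1) * (c * (1/m)) = c - c / m := by field_simp
    rw [h5]
    have : c / m ≤ 1 / m := by gcongr
    linarith
  have hl2 : (m - 1 : ℕ) * (c * (1 / m)) + 1 / m + ε / 2 < c + ε := by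
    rw [hmR1]
    have h5 : ((m:ℝ) - 1) * (c * (1/m)) = c - c / m := by field_simp
    rw [h5]
    have h6 : 0 ≤ c / m := by positivity
    linarith
  -- pointwise bounds (naturals)
  have hboundN : ∀ n : ℕ,
      (∑ s ∈ Finset.range (m - 1), ∑ t ∈ Finset.range (T n), χ (t * m + s)) ≤ D q + A n
      ∧ D q + A n ≤ (∑ s ∈ Finset.range (m - 1), ∑ t ∈ Finset.range (T n + 1), χ (t * m + s))
          + (T n + 1) := by
    intro n
    constructor
    · calc (∑ s ∈ Finset.range (m - 1), ∑ t ∈ Finset.range (T n), χ (t * m + s))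
          ≤ ∑ s ∈ Finset.range m, ∑ t ∈ Finset.range (T n), χ (t * m + s) :=
            Finset.sum_le_sum_of_subset (Finset.range_subset_range.2 (by omega))
        _ = D (T n * m) := (hgrid m (T n)).symm
        _ ≤ D (q + n) := hDmono (by rw [hT]; exact Nat.div_mul_le_self _ _)
        _ = D q + A n := hDA n
    · have hm1 : m - 1 + 1 = m := by omega
      calc D q + A n = D (q + n) := (hDA n).symm
        _ ≤ D ((T n + 1) * m) := hDmono (by
            have : q + n < (T n + 1) * m := S19.lt_div_succ_mul _ _ (by omega)
            omega)
        _ = ∑ s ∈ Finset.range m, ∑ t ∈ Finset.range (T n + 1), χ (t * m + s) := hgrid m _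
        _ = (∑ s ∈ Finset.range (m - 1), ∑ t ∈ Finset.range (T n + 1), χ (t * m + s))
              + ∑ t ∈ Finset.range (T n + 1), χ (t * m + (m - 1)) := by
            rw [← Finset.sum_range_succ, hm1]
        _ ≤ _ := by
            have := hCle m (m - 1) (T n + 1)
            omega
  -- extract eventual bounds and conclude
  obtain ⟨N₁, hN₁⟩ := Metric.tendsto_atTop.1 hLB (ε / 2) (half_pos hε)
  obtain ⟨N₂, hN₂⟩ := Metric.tendsto_atTop.1 hUB (ε / 2) (half_pos hε)
  refine ⟨max (max N₁ N₂) 1, fun n hn => ?_⟩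
  have hn1 : 1 ≤ n := le_trans (le_max_right _ _) hn
  have hnN₁ : N₁ ≤ n := le_trans (le_trans (le_max_left _ _) (le_max_left _ _)) hn
  have hnN₂ : N₂ ≤ n := le_trans (le_trans (le_max_right _ _) (le_max_left _ _)) hn
  have hn0 : (0:ℝ) < n := by exact_mod_cast hn1
  have h1 := hN₁ n hnN₁
  have h2 := hN₂ n hnN₂
  rw [Real.dist_eq, abs_lt] at h1 h2
  rw [htarget n, Real.dist_eq, abs_lt]
  have hb := hboundN n
  -- lower bound on (A n)/n
  have hcast1 : (∑ s ∈ Finset.range (m - 1), ((∑ t ∈ Finset.range (T n), χ (t * m + s)) : ℝ))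
      ≤ (D q : ℝ) + (A n : ℝ) := by exact_mod_cast hb.1
  have hcast2 : (D q : ℝ) + (A n : ℝ) ≤
      (∑ s ∈ Finset.range (m - 1), ((∑ t ∈ Finset.range (T n + 1), χ (t * m + s)) : ℝ))
        + ((T n + 1 : ℕ) : ℝ) := by exact_mod_cast hb.2
  have hDq0 : (0:ℝ) ≤ (D q : ℝ) := by positivity
  have hlow : (∑ s ∈ Finset.range (m - 1), ((∑ t ∈ Finset.range (T n), χ (t * m + s)) : ℝ) / n)
      - (D q : ℝ) / n ≤ (A n : ℝ) / n := by
    rw [← Finset.sum_div, ← sub_div]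
    gcongr
    linarith
  have hup : (A n : ℝ) / n ≤
      (∑ s ∈ Finset.range (m - 1), ((∑ t ∈ Finset.range (T n + 1), χ (t * m + s)) : ℝ) / n)
        + ((T n + 1 : ℕ) : ℝ) / n := by
    rw [← Finset.sum_div, ← add_div]
    gcongr
    linarith
  constructor <;> linarith [h1.1, h1.2, h2.1, h2.2, hl1, hl2, hlow, hup]
end
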